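/- arXiv:2503.06908 — 5 statements merged into one kernel-verified Lean document; each statement's English description precedes it below -/
import Mathlib

section
/- Let G be a finite abelian group, f : G → ℝ a real-valued function, and v : Ĝ → ℝ a nonzero function with v(χ) ≥ 0 for all χ ∈ Ĝ. Set μ = |supp(v)| and let k be an integer with 1 ≤ k ≤ |G| − 1. Then (|G| − k·μ)·ν_{k+1}(f) ≥ |G|·R_f(v) − μ·Σ_{i=1}^{k} ν_i(f). In particular, if k·μ < |G| then ν_{k+1}(f) ≥ (|G|·R_f(v) − μ·Σ_{i=1}^{k} ν_i(f))/(|G| − k·μ), and if k·μ > |G| then ν_{k+1}(f) ≤ (|G|·R_f(v) − μ·Σ_{i=1}^{k} ν_i(f))/(|G| − k·μ). -/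
open Complex Finset

/-- The dual group `Ĝ = G →* ℂˣ` of a finite abelian group is finite. -/
noncomputable instance instFintypeDual (G : Type*) [CommGroup G] [Fintype G] :
    Fintype (G →* ℂˣ) := by
  have : NeZero (Monoid.exponent G) := ⟨Monoid.exponent_ne_zero_of_finite⟩
  have : Finite (G →* ℂˣ) := by
    obtain ⟨e⟩ := CommGroup.monoidHom_mulEquiv_of_hasEnoughRootsOfUnity G ℂ
    exact Finite.of_equiv G e.symm.toEquiv
  exact Fintype.ofFinite _

/-- The Fourier transform of `f : G → ℂ`, as a function on the dual group `G →* ℂˣ`: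
`f̂(χ) = (1/|G|) ∑_{x ∈ G} f(x) conj(χ(x))`. -/
noncomputable def fourierT {G : Type*} [CommGroup G] [Fintype G] (f : G → ℂ) :
    (G →* ℂˣ) → ℂ :=
  fun χ => (Fintype.card G : ℂ)⁻¹ * ∑ x : G, f x * (starRingEnd ℂ) ((χ x : ℂ))

/-- Normalized inner product `⟨u,w⟩ = (1/|α|) ∑ u(χ) conj(w(χ))`. -/
noncomputable def inn {α : Type*} [Fintype α] (u w : α → ℂ) : ℂ :=
  (Fintype.card α : ℂ)⁻¹ * ∑ χ : α, u χ * (starRingEnd ℂ) (w χ)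

/-- Normalized convolution `(u∗w)(χ) = (1/|α|) ∑_ρ u(χρ⁻¹) w(ρ)`. -/
noncomputable def convol {α : Type*} [Group α] [Fintype α] (u w : α → ℂ) : α → ℂ :=
  fun χ => (Fintype.card α : ℂ)⁻¹ * ∑ ρ : α, u (χ * ρ⁻¹) * w ρ

/-- The Rayleigh quotient `R_f(v) = |G| ⟨f̂ ∗ v, v⟩ / ⟨v, v⟩`. -/
noncomputable def Rq {G : Type*} [CommGroup G] [Fintype G] (f : G → ℂ)
    (v : (G →* ℂˣ) → ℂ) : ℂ :=
  (Fintype.card G : ℂ) * inn (convol (fourierT f) v) v / inn v v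

/-- `nu f k` is the `k`-th largest value (1-indexed, with multiplicity) of the
real-valued function `f` on a finite type. -/
noncomputable def nu {G : Type*} [Fintype G] (f : G → ℝ) (k : ℕ) : ℝ :=
  ((Finset.univ.val.map f).sort (· ≤ ·)).getD (Fintype.card G - k) 0

/-- `f` is positive definite: every Fourier coefficient is a nonnegative real number. -/
def PosDef {G : Type*} [CommGroup G] [Fintype G] (f : G → ℂ) : Prop :=
  ∀ χ : G →* ℂˣ, (fourierT f χ).im = 0 ∧ 0 ≤ (fourierT f χ).re

section aux
variable {G : Type*} [CommGroup G] [Fintype G]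

lemma card_dual_eq : Fintype.card (G →* ℂˣ) = Fintype.card G := by
  have : NeZero (Monoid.exponent G) := ⟨Monoid.exponent_ne_zero_of_finite⟩
  obtain ⟨e⟩ := CommGroup.monoidHom_mulEquiv_of_hasEnoughRootsOfUnity G ℂ
  exact Fintype.card_congr e.toEquiv

lemma char_norm_one (χ : G →* ℂˣ) (x : G) : ‖(χ x : ℂ)‖ = 1 := by
  refine Complex.norm_eq_one_of_pow_eq_one ?_ (Fintype.card_ne_zero (α := G))
  rw [← Units.val_pow_eq_pow_val, ← map_pow, pow_card_eq_one, map_one, Units.val_one]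

lemma char_conj_eq_inv (χ : G →* ℂˣ) (x : G) :
    (starRingEnd ℂ) ((χ x : ℂ)) = ((χ x : ℂ))⁻¹ := by
  have hns : Complex.normSq ((χ x : ℂ)) = 1 := by
    rw [Complex.normSq_eq_norm_sq, char_norm_one, one_pow]
  refine eq_inv_of_mul_eq_one_left ?_
  rw [mul_comm, Complex.mul_conj, hns, Complex.ofReal_one]

lemma sum_char_eq (η : G →* ℂˣ) :
    ∑ x : G, ((η x : ℂ)) = if η = 1 then (Fintype.card G : ℂ) else 0 := by
  split_ifs with h
  · subst h; simp
  · obtain ⟨y, hy⟩ : ∃ y, η y ≠ 1 := by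
      by_contra hc; push_neg at hc; exact h (MonoidHom.ext fun z => hc z)
    have key : (η y : ℂ) * ∑ x : G, ((η x : ℂ)) = ∑ x : G, ((η x : ℂ)) := by
      rw [Finset.mul_sum]
      refine Fintype.sum_equiv (Equiv.mulLeft y) _ _ fun x => ?_
      rw [← Units.val_mul, ← map_mul]
      rfl
    have hy' : ((η y : ℂ)) ≠ 1 := by
      simpa using fun hh => hy (Units.ext (by simpa using hh))
    have h0 : ((η y : ℂ) - 1) * ∑ x : G, ((η x : ℂ)) = 0 := by
      rw [sub_mul, one_mul, key, sub_self]
    rcases mul_eq_zero.mp h0 with h1 | h2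
    · exact absurd (by linear_combination h1) hy'
    · exact h2

lemma char_mul_inv_coe (χ ρ : G →* ℂˣ) (x : G) :
    ((((χ * ρ⁻¹) x : ℂˣ)) : ℂ) = (χ x : ℂ) * ((ρ x : ℂ))⁻¹ := by
  simp

lemma sum_char_mul_conj (χ ρ : G →* ℂˣ) :
    ∑ x : G, (χ x : ℂ) * (starRingEnd ℂ) ((ρ x : ℂ)) =
      if χ = ρ then (Fintype.card G : ℂ) else 0 := by
  have h1 : ∀ x, (χ x : ℂ) * (starRingEnd ℂ) ((ρ x : ℂ)) = (((χ * ρ⁻¹) x : ℂˣ) : ℂ) := by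
    intro x
    rw [char_conj_eq_inv, char_mul_inv_coe]
  simp_rw [h1, sum_char_eq]
  congr 1
  exact propext (@mul_inv_eq_one (G →* ℂˣ) _ _ _)

lemma char_conj_mul_inv (χ ρ : G →* ℂˣ) (x : G) :
    (starRingEnd ℂ) ((((χ * ρ⁻¹) x : ℂˣ)) : ℂ) =
      (starRingEnd ℂ) ((χ x : ℂ)) * (ρ x : ℂ) := by
  rw [char_mul_inv_coe, map_mul, map_inv₀, char_conj_eq_inv ρ, inv_inv]

end aux

/-- the key inequality relating `ν_{k+1}(f)` to the Rayleigh quotient of a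
nonnegative nonzero `v : Ĝ → ℝ` with support of size `μ`. -/
theorem stmt_1 (G : Type*) [CommGroup G] [Fintype G] (f : G → ℝ)
    (v : (G →* ℂˣ) → ℝ) (hv : v ≠ 0) (hvpos : ∀ χ, 0 ≤ v χ)
    (μ : ℕ) (hμ : μ = (Function.support v).ncard)
    (k : ℕ) (hk1 : 1 ≤ k) (hk2 : k ≤ Fintype.card G - 1) :
    ((Fintype.card G : ℝ) - k * μ) * nu f (k + 1) ≥
      (Fintype.card G : ℝ) * (Rq (fun x => (f x : ℂ)) (fun χ => (v χ : ℂ))).re -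
        μ * ∑ i ∈ Finset.Icc 1 k, nu f i ∧
    (k * μ < Fintype.card G →
      nu f (k + 1) ≥
        ((Fintype.card G : ℝ) * (Rq (fun x => (f x : ℂ)) (fun χ => (v χ : ℂ))).re -
          μ * ∑ i ∈ Finset.Icc 1 k, nu f i) / ((Fintype.card G : ℝ) - k * μ)) ∧
    (Fintype.card G < k * μ →
      nu f (k + 1) ≤
        ((Fintype.card G : ℝ) * (Rq (fun x => (f x : ℂ)) (fun χ => (v χ : ℂ))).re -
          μ * ∑ i ∈ Finset.Icc 1 k, nu f i) / ((Fintype.card G : ℝ) - k * μ)) := by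
  classical
  have hcard : Fintype.card (G →* ℂˣ) = Fintype.card G := card_dual_eq
  set n := Fintype.card G with hn
  have hn1 : 1 ≤ n := Fintype.card_pos
  have hkn : k + 1 ≤ n := by omega
  set N : ℂ := (n : ℂ) with hN
  have hN0 : N ≠ 0 := Nat.cast_ne_zero.mpr (by omega)
  set V : (G →* ℂˣ) → ℂ := fun χ => (v χ : ℂ) with hV
  set F : G → ℂ := fun x => (f x : ℂ) with hF
  set W : G → ℂ := fun x => ∑ ρ : G →* ℂˣ, V ρ * ((ρ x : ℂ)) with hW
  set q : G → ℝ := fun x => Complex.normSq (W x) with hq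
  set S : ℝ := ∑ χ : G →* ℂˣ, (v χ)^2 with hS
  have hS0 : 0 < S := by
    obtain ⟨χ₀, hχ₀⟩ := Function.ne_iff.mp hv
    have hχ₀' : v χ₀ ≠ 0 := by simpa using hχ₀
    exact Finset.sum_pos' (fun χ _ => sq_nonneg _)
      ⟨χ₀, Finset.mem_univ _, by positivity⟩
  have hWconj : ∀ x, (starRingEnd ℂ) (W x) =
      ∑ χ : G →* ℂˣ, V χ * (starRingEnd ℂ) ((χ x : ℂ)) := by
    intro x
    simp only [hW, map_sum, map_mul, hV, Complex.conj_ofReal]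
  have hqC : ∀ x, ((q x : ℝ) : ℂ) = W x * (starRingEnd ℂ) (W x) :=
    fun x => (Complex.mul_conj _).symm
  have parsevalC : ∑ x : G, ((q x : ℝ) : ℂ) = N * (S : ℂ) := by
    calc ∑ x : G, ((q x : ℝ) : ℂ) = ∑ x : G, W x * (starRingEnd ℂ) (W x) := by
          simp_rw [hqC]
      _ = ∑ x : G, ∑ ρ : G →* ℂˣ, ∑ χ : G →* ℂˣ,
            (V ρ * V χ) * ((ρ x : ℂ) * (starRingEnd ℂ) ((χ x : ℂ))) := by
          refine Finset.sum_congr rfl fun x _ => ?_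
          rw [hWconj]
          simp only [hW]
          rw [Finset.sum_mul_sum]
          exact Finset.sum_congr rfl fun ρ _ => Finset.sum_congr rfl fun χ _ => by ring
      _ = ∑ ρ : G →* ℂˣ, ∑ χ : G →* ℂˣ,
            (V ρ * V χ) * ∑ x : G, (ρ x : ℂ) * (starRingEnd ℂ) ((χ x : ℂ)) := by
          rw [Finset.sum_comm]
          refine Finset.sum_congr rfl fun ρ _ => ?_
          rw [Finset.sum_comm]
          exact Finset.sum_congr rfl fun χ _ => (Finset.mul_sum _ _ _).symm
      _ = ∑ ρ : G →* ℂˣ, (V ρ * V ρ) * N := by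
          refine Finset.sum_congr rfl fun ρ _ => ?_
          simp only [sum_char_mul_conj, mul_ite, mul_zero]
          rw [Finset.sum_ite_eq]
          simp
          exact Or.inl rfl
      _ = N * (S : ℂ) := by
          simp only [hV, hS]
          push_cast
          rw [Finset.mul_sum]
          exact Finset.sum_congr rfl fun ρ _ => by ring
  have parseval : ∑ x : G, q x = n * S := by
    have pc := parsevalC
    rw [hN] at pc
    exact_mod_cast pc
  have hden : inn V V = N⁻¹ * (S : ℂ) := by
    unfold inn
    rw [hcard]
    simp only [hV, Complex.conj_ofReal, hS]
    push_cast
    congr 1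
    exact Finset.sum_congr rfl fun χ _ => by ring
  have reorder : ∀ (g : (G →* ℂˣ) → (G →* ℂˣ) → G → ℂ),
      (∑ χ : G →* ℂˣ, ∑ ρ : G →* ℂˣ, ∑ x : G, g χ ρ x) =
        ∑ x : G, ∑ χ : G →* ℂˣ, ∑ ρ : G →* ℂˣ, g χ ρ x := by
    intro g
    calc (∑ χ : G →* ℂˣ, ∑ ρ : G →* ℂˣ, ∑ x : G, g χ ρ x)
        = ∑ χ : G →* ℂˣ, ∑ x : G, ∑ ρ : G →* ℂˣ, g χ ρ x :=
          Finset.sum_congr rfl fun χ _ => Finset.sum_comm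
      _ = ∑ x : G, ∑ χ : G →* ℂˣ, ∑ ρ : G →* ℂˣ, g χ ρ x := Finset.sum_comm
  have hnum : inn (convol (fourierT F) V) V = N⁻¹^3 * ∑ x : G, F x * ((q x : ℝ) : ℂ) := by
    rw [hN]
    unfold inn convol fourierT
    rw [hcard, ← hn]
    simp only [char_conj_mul_inv, hV, Complex.conj_ofReal]
    simp only [hqC, hWconj, hW, hV, map_sum, map_mul, Complex.conj_ofReal]
    simp only [Finset.mul_sum, Finset.sum_mul]
    rw [reorder]
    refine Finset.sum_congr rfl fun x _ => Finset.sum_congr rfl fun ρ _ =>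
      Finset.sum_congr rfl fun χ _ => by ring
  have hsumC : ∑ x : G, F x * ((q x : ℝ) : ℂ) = ((∑ x : G, f x * q x : ℝ) : ℂ) := by
    simp only [hF]
    push_cast
    rfl
  have hRq : (Rq F V).re = (∑ x : G, f x * q x) / (n * S) := by
    have hobj : Rq F V = (((∑ x : G, f x * q x) / (n * S) : ℝ) : ℂ) := by
      unfold Rq
      rw [hnum, hden, hsumC, ← hn]
      rw [← hN]
      push_cast
      have hS0' : (S : ℂ) ≠ 0 := Complex.ofReal_ne_zero.mpr hS0.ne'
      have hn0C : (n : ℂ) ≠ 0 := by exact_mod_cast (show n ≠ 0 by omega)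
      rw [hN]
      field_simp
    rw [hobj, Complex.ofReal_re]
  set T : Finset (G →* ℂˣ) := Finset.univ.filter (fun χ => v χ ≠ 0) with hT
  have hμ' : μ = T.card := by
    rw [hμ]
    have hsupp : Function.support v = ↑T := by
      ext χ; simp [hT, Function.mem_support]
    rw [hsupp, Set.ncard_coe_finset]
  have hq0 : ∀ x, 0 ≤ q x := fun x => Complex.normSq_nonneg _
  have hqle : ∀ x, q x ≤ μ * S := by
    intro x
    have hWT : W x = ∑ ρ ∈ T, V ρ * ((ρ x : ℂ)) := by
      simp only [hW]
      symm
      apply Finset.sum_subset (Finset.subset_univ _)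
      intro ρ _ hρ
      simp only [hT, Finset.mem_filter, Finset.mem_univ, true_and, not_not] at hρ
      simp [hV, hρ]
    have hnormW : ‖W x‖ ≤ ∑ ρ ∈ T, v ρ := by
      rw [hWT]
      refine (norm_sum_le _ _).trans (Finset.sum_le_sum fun ρ _ => ?_)
      rw [norm_mul, char_norm_one, mul_one, hV]
      simp [Complex.norm_real, _root_.abs_of_nonneg (hvpos ρ)]
    have h1 : q x ≤ (∑ ρ ∈ T, v ρ)^2 := by
      simp only [hq]
      rw [Complex.normSq_eq_norm_sq]
      have h0 := norm_nonneg (W x)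
      nlinarith [Finset.sum_nonneg (fun ρ (_ : ρ ∈ T) => hvpos ρ)]
    have h2 : (∑ ρ ∈ T, v ρ)^2 ≤ T.card * ∑ ρ ∈ T, (v ρ)^2 := sq_sum_le_card_mul_sum_sq
    have h3 : ∑ ρ ∈ T, (v ρ)^2 ≤ S :=
      Finset.sum_le_sum_of_subset_of_nonneg (Finset.subset_univ _) (fun χ _ _ => sq_nonneg _)
    calc q x ≤ (∑ ρ ∈ T, v ρ)^2 := h1
      _ ≤ T.card * ∑ ρ ∈ T, (v ρ)^2 := h2
      _ ≤ μ * S := by rw [hμ']; exact mul_le_mul_of_nonneg_left h3 (Nat.cast_nonneg _)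
  set l := (Finset.univ.val.map f).sort (· ≤ ·) with hl
  have hlen : l.length = n := by
    simp only [hl]
    rw [Multiset.length_sort, Multiset.card_map]
    exact Finset.card_univ
  have hsorted : l.Pairwise (· ≤ ·) := Multiset.pairwise_sort _ _
  have hnuget : ∀ i, (h : n - i < l.length) → nu f i = l.get ⟨n - i, h⟩ := by
    intro i h
    unfold nu
    rw [← hn, ← hl, List.getD_eq_getElem _ _ h]
    rfl
  set t := nu f (k+1) with ht
  have hidx : n - (k+1) < l.length := by omega
  have hmono : ∀ i ∈ Finset.Icc 1 k, t ≤ nu f i := by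
    intro i hi
    simp only [Finset.mem_Icc] at hi
    have h2 : n - i < l.length := by omega
    rw [ht, hnuget (k+1) hidx, hnuget i h2]
    exact hsorted.rel_get_of_le (by simp only [Fin.mk_le_mk]; omega)
  have hg : ∀ (g : ℝ → ℝ), ∑ x : G, g (f x) = ∑ j ∈ Finset.range n, g (l.getD j 0) := by
    intro g
    have e1 : ∑ x : G, g (f x) = ((Finset.univ.val.map f).map g).sum := by
      rw [Multiset.map_map]
      rfl
    have e2 : ((Finset.univ.val.map f).map g).sum = (l.map g).sum := by
      rw [← Multiset.sort_eq (Finset.univ.val.map f) (· ≤ ·), ← hl, Multiset.map_coe,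
        Multiset.sum_coe]
    have e3 : (l.map g).sum = ∑ i : Fin l.length, g (l.get i) := by
      rw [← Fin.sum_univ_fun_getElem l g]
      exact Finset.sum_congr rfl fun i _ => by rw [List.get_eq_getElem]
    have e4 : ∑ i : Fin l.length, g (l.get i) = ∑ j ∈ Finset.range n, g (l.getD j 0) := by
      rw [← hlen]
      rw [← Fin.sum_univ_eq_sum_range (fun j => g (l.getD j 0)) l.length]
      exact Finset.sum_congr rfl fun i _ => by
        rw [List.getD_eq_getElem _ _ i.isLt, List.get_eq_getElem]
    rw [e1, e2, e3, e4]
  have hsum_max : ∑ x : G, max (f x - t) 0 = ∑ i ∈ Finset.Icc 1 k, (nu f i - t) := by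
    rw [hg (fun a => max (a - t) 0)]
    rw [Finset.range_eq_Ico, ← Finset.sum_Ico_consecutive _ (Nat.zero_le (n-k)) (Nat.sub_le n k)]
    have hfirst : ∑ j ∈ Finset.Ico 0 (n-k), max (l.getD j 0 - t) 0 = 0 := by
      refine Finset.sum_eq_zero fun j hj => ?_
      simp only [Finset.mem_Ico] at hj
      have hj1 : j < l.length := by omega
      have hjle : l.getD j 0 ≤ t := by
        rw [ht, hnuget (k+1) hidx, List.getD_eq_getElem _ _ hj1]
        have := hsorted.rel_get_of_le
          (a := ⟨j, hj1⟩) (b := ⟨n - (k+1), hidx⟩) (by simp only [Fin.mk_le_mk]; omega)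
        simpa [List.get_eq_getElem] using this
      exact max_eq_right (sub_nonpos.mpr hjle)
    have hsecond : ∑ j ∈ Finset.Ico (n-k) n, max (l.getD j 0 - t) 0 =
        ∑ i ∈ Finset.Icc 1 k, (nu f i - t) := by
      refine Finset.sum_nbij' (i := fun j => n - j) (j := fun i => n - i) ?_ ?_ ?_ ?_ ?_
      · intro a ha
        simp only [Finset.mem_Ico] at ha
        simp only [Finset.mem_Icc]
        omega
      · intro a ha
        simp only [Finset.mem_Icc] at ha
        simp only [Finset.mem_Ico]
        omega
      · intro a ha
        simp only [Finset.mem_Ico] at ha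
        show n - (n - a) = a
        omega
      · intro a ha
        simp only [Finset.mem_Icc] at ha
        show n - (n - a) = a
        omega
      · intro a ha
        simp only [Finset.mem_Ico] at ha
        have hmem : n - a ∈ Finset.Icc 1 k := by simp only [Finset.mem_Icc]; omega
        have ha1 : a < l.length := by omega
        have hnn : n - (n - a) = a := by omega
        have hnu : nu f (n - a) = l.getD a 0 := by
          have h2 : n - (n - a) < l.length := by omega
          rw [hnuget (n - a) h2, List.getD_eq_getElem _ _ ha1]
          simp only [List.get_eq_getElem]
          congr 1
        have htle : t ≤ nu f (n - a) := hmono _ hmem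
        rw [hnu] at htle ⊢
        rw [max_eq_left (by linarith)]
    rw [hfirst, hsecond, zero_add]
  have hmain : ∑ x : G, f x * q x ≤
      ((μ : ℝ) * ((∑ i ∈ Finset.Icc 1 k, nu f i) - k * t) + t * n) * S := by
    calc ∑ x : G, f x * q x
        = ∑ x : G, ((f x - t) * q x + t * q x) :=
          Finset.sum_congr rfl fun x _ => by ring
      _ = ∑ x : G, (f x - t) * q x + t * ∑ x : G, q x := by
          rw [Finset.sum_add_distrib, Finset.mul_sum]
      _ ≤ ∑ x : G, max (f x - t) 0 * (μ * S) + t * (n * S) := by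
          refine add_le_add (Finset.sum_le_sum fun x _ => ?_) (le_of_eq (by rw [parseval]))
          rcases le_total (f x) t with h | h
          · have h1 : (f x - t) * q x ≤ 0 := by nlinarith [hq0 x]
            have h2 : 0 ≤ max (f x - t) 0 * (μ * S) :=
              mul_nonneg (le_max_right _ _) (by positivity)
            linarith
          · rw [max_eq_left (by linarith)]
            exact mul_le_mul_of_nonneg_left (hqle x) (by linarith)
      _ = (μ * S) * ∑ x : G, max (f x - t) 0 + t * (n * S) := by
          rw [← Finset.sum_mul]; ring
      _ = ((μ : ℝ) * ((∑ i ∈ Finset.Icc 1 k, nu f i) - k * t) + t * n) * S := by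
          rw [hsum_max, Finset.sum_sub_distrib, Finset.sum_const, Nat.card_Icc,
            Nat.add_sub_cancel, nsmul_eq_mul]
          ring
  have hn0 : (n : ℝ) ≠ 0 := by positivity
  have key : ((n : ℝ) - k * μ) * t ≥
      (n : ℝ) * (Rq F V).re - μ * ∑ i ∈ Finset.Icc 1 k, nu f i := by
    rw [ge_iff_le, hRq]
    have h2 : (n : ℝ) * ((∑ x : G, f x * q x) / ((n : ℝ) * S)) = (∑ x : G, f x * q x) / S := by
      field_simp
    rw [h2]
    have h3 : (∑ x : G, f x * q x) / S ≤
        (μ : ℝ) * ((∑ i ∈ Finset.Icc 1 k, nu f i) - k * t) + t * n := by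
      rw [div_le_iff₀ hS0]
      exact hmain
    linarith [h3]
  refine ⟨key, fun hlt => ?_, fun hgt => ?_⟩
  · have hc : (0:ℝ) < (n:ℝ) - k * μ := by
      have := (Nat.cast_lt (α := ℝ)).mpr hlt
      push_cast at this
      linarith
    rw [ge_iff_le, div_le_iff₀ hc]
    linarith [key]
  · have hc : (n:ℝ) - k * μ < 0 := by
      have := (Nat.cast_lt (α := ℝ)).mpr hgt
      push_cast at this
      linarith
    rw [le_div_iff_of_neg hc]
    linarith [key]
end

section
/- Let G be a finite abelian group with |G| ≥ 2, f : G → ℝ a real-valued positive definite function, G₁ an abelian group, η : G₁ → Ĝ a group homomorphism, and S ⊆ G₁ with η(S) = supp(f̂) and |S| = |supp(f̂)|. Let h : G₁ → ℝ be a finitely supported, nonnegative, not identically zero function with μ := |supp(η_*(h))| < |G|, and let C > 0 be a real number such that (M_f^{G₁}(h))(z) ≥ C·h(z) for all z ∈ G₁. Then ν₂(f) ≥ ν₁(f) + |G|·(C − ν₁(f))/(|G| − μ). -/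
open Complex Finset

open scoped BigOperators

/-! ### Auxiliary lemmas on characters -/

section chars
variable {G : Type*} [CommGroup G] [Fintype G]

lemma char_abs (σ : G →* ℂˣ) (x : G) : ‖((σ x : ℂ))‖ = 1 := by
  have h1 : ((σ x : ℂ)) ^ (Fintype.card G) = 1 := by
    have h0 : σ x ^ (Fintype.card G) = 1 := by
      rw [← map_pow, pow_card_eq_one, map_one]
    have := congrArg (Units.val) h0
    simpa using this
  have h2 : (‖((σ x : ℂ))‖) ^ (Fintype.card G) = 1 := by
    rw [← norm_pow, h1, norm_one]
  have hpos : (0:ℝ) ≤ ‖((σ x : ℂ))‖ := norm_nonneg _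
  have hcard : 0 < Fintype.card G := Fintype.card_pos
  rcases (pow_eq_one_iff_cases).mp h2 with h | h | h
  · omega
  · exact h
  · nlinarith [h.1]

lemma char_conj (σ : G →* ℂˣ) (x : G) :
    (starRingEnd ℂ) ((σ x : ℂ)) = ((σ⁻¹) x : ℂ) := by
  have h := Complex.inv_eq_conj (char_abs σ x)
  rw [← h]
  simp [Units.val_inv_eq_inv_val]

lemma char_sum_eq_zero {σ : G →* ℂˣ} (hσ : σ ≠ 1) : ∑ x : G, ((σ x : ℂ)) = 0 := by
  obtain ⟨y, hy⟩ : ∃ y, σ y ≠ 1 := by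
    by_contra hc
    push_neg at hc
    exact hσ (MonoidHom.ext fun y => hc y)
  have key : ((σ y : ℂ)) * ∑ x : G, ((σ x : ℂ)) = ∑ x : G, ((σ x : ℂ)) := by
    rw [Finset.mul_sum]
    refine Fintype.sum_equiv (Equiv.mulLeft y) _ _ fun x => ?_
    simp [map_mul]
  have hy' : ((σ y : ℂ)) ≠ 1 := by
    intro hc
    exact hy (Units.ext hc)
  have h2 : (((σ y : ℂ)) - 1) * ∑ x : G, ((σ x : ℂ)) = 0 := by
    rw [sub_mul, one_mul, key, sub_self]
  rcases mul_eq_zero.mp h2 with h | h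
  · exact absurd (sub_eq_zero.mp h) hy'
  · exact h

lemma char_sum (σ : G →* ℂˣ) :
    ∑ x : G, ((σ x : ℂ)) = if σ = 1 then (Fintype.card G : ℂ) else 0 := by
  split_ifs with h
  · subst h; simp
  · exact char_sum_eq_zero h

lemma char_ortho (χ ρ : G →* ℂˣ) :
    ∑ x : G, (starRingEnd ℂ) ((χ x : ℂ)) * ((ρ x : ℂ)) =
      if ρ = χ then (Fintype.card G : ℂ) else 0 := by
  have : ∀ x : G, (starRingEnd ℂ) ((χ x : ℂ)) * ((ρ x : ℂ)) = (((χ⁻¹ * ρ) x : ℂ)) := by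
    intro x
    rw [char_conj]
    simp [Units.val_mul]
  simp_rw [this]
  rw [char_sum]
  congr 1
  simp only [eq_iff_iff]
  constructor
  · intro h1; exact (inv_mul_eq_one.mp h1).symm
  · rintro rfl; exact inv_mul_cancel ρ

end chars

/-! ### Auxiliary lemmas on `nu` -/

section nuLem
variable {G : Type*} [Fintype G] (f : G → ℝ)

lemma sorted_getElem_le {l : List ℝ} (hs : l.Pairwise (· ≤ ·)) {i j : ℕ}
    (hi : i < l.length) (hj : j < l.length) (hij : i ≤ j) : l[i] ≤ l[j] := by
  have := hs.rel_get_of_le (a := ⟨i, hi⟩) (b := ⟨j, hj⟩) hij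
  simpa [List.get_eq_getElem] using this

lemma nu_sorted_len : ((Finset.univ.val.map f).sort (· ≤ ·)).length = Fintype.card G := by
  rw [Multiset.length_sort, Multiset.card_map]
  rfl

lemma nu_le_nu (hG : 2 ≤ Fintype.card G) : nu f 2 ≤ nu f 1 := by
  set l := ((Finset.univ.val.map f).sort (· ≤ ·)) with hl
  have hlen : l.length = Fintype.card G := nu_sorted_len f
  have h1 : Fintype.card G - 1 < l.length := by omega
  have h2 : Fintype.card G - 2 < l.length := by omega
  have hs : l.Pairwise (· ≤ ·) := Multiset.pairwise_sort _ _
  unfold nu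
  rw [← hl, List.getD_eq_getElem l 0 h1, List.getD_eq_getElem l 0 h2]
  exact sorted_getElem_le hs h2 h1 (by omega)

lemma le_nu_one (hG : 1 ≤ Fintype.card G) (x : G) : f x ≤ nu f 1 := by
  set l := ((Finset.univ.val.map f).sort (· ≤ ·)) with hl
  have hlen : l.length = Fintype.card G := nu_sorted_len f
  have h1 : Fintype.card G - 1 < l.length := by omega
  have hs : l.Pairwise (· ≤ ·) := Multiset.pairwise_sort _ _
  have hmem : f x ∈ l := by
    rw [← Multiset.mem_coe, Multiset.sort_eq]
    exact Multiset.mem_map_of_mem f (Finset.mem_univ_val x)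
  obtain ⟨i, hilt, hieq⟩ := List.mem_iff_getElem.mp hmem
  unfold nu
  rw [← hl, List.getD_eq_getElem l 0 h1, ← hieq]
  exact sorted_getElem_le hs hilt h1 (by omega)

lemma exists_nu_one (hG : 1 ≤ Fintype.card G) : ∃ x : G, f x = nu f 1 := by
  set l := ((Finset.univ.val.map f).sort (· ≤ ·)) with hl
  have hlen : l.length = Fintype.card G := nu_sorted_len f
  have h1 : Fintype.card G - 1 < l.length := by omega
  have hmem : l[Fintype.card G - 1] ∈ l := List.getElem_mem _
  rw [← Multiset.mem_coe, Multiset.sort_eq] at hmem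
  obtain ⟨x, _, hx⟩ := Multiset.mem_map.mp hmem
  exact ⟨x, by unfold nu; rw [← hl, List.getD_eq_getElem l 0 h1, hx]⟩

lemma le_nu_two (hG : 2 ≤ Fintype.card G) (x₀ : G) (hmax : ∀ x, f x ≤ f x₀)
    (x : G) (hx : x ≠ x₀) : f x ≤ nu f 2 := by
  classical
  by_contra hc
  push_neg at hc
  set b := nu f 2 with hb
  set l := ((Finset.univ.val.map f).sort (· ≤ ·)) with hl
  have hlen : l.length = Fintype.card G := nu_sorted_len f
  have h2 : Fintype.card G - 2 < l.length := by omega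
  have hs : l.Pairwise (· ≤ ·) := Multiset.pairwise_sort _ _
  have hbval : b = l[Fintype.card G - 2] := by
    rw [hb]; unfold nu; rw [← hl, List.getD_eq_getElem l 0 h2]
  have hcount1 : l.countP (fun a => decide (b < a)) ≤ 1 := by
    have hsplit : l.take (Fintype.card G - 1) ++ l.drop (Fintype.card G - 1) = l :=
      List.take_append_drop _ _
    have hcp : l.countP (fun a => decide (b < a)) =
        (l.take (Fintype.card G - 1)).countP (fun a => decide (b < a)) +
        (l.drop (Fintype.card G - 1)).countP (fun a => decide (b < a)) := by
      conv_lhs => rw [← hsplit]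
      exact List.countP_append
    rw [hcp]
    have htake : (l.take (Fintype.card G - 1)).countP (fun a => decide (b < a)) = 0 := by
      rw [List.countP_eq_zero]
      intro a ha
      obtain ⟨i, him, hieq⟩ := List.mem_take_iff_getElem.mp ha
      have hilt : i < l.length := lt_of_lt_of_le him (min_le_right _ _)
      have hle : l[i] ≤ l[Fintype.card G - 2] :=
        sorted_getElem_le hs hilt h2 (by omega)
      rw [hieq, ← hbval] at hle
      simpa using not_lt.mpr hle
    have hdrop : (l.drop (Fintype.card G - 1)).countP (fun a => decide (b < a)) ≤ 1 := by
      calc _ ≤ (l.drop (Fintype.card G - 1)).length := List.countP_le_length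
        _ = 1 := by rw [List.length_drop]; omega
    omega
  have hcount2 : 2 ≤ l.countP (fun a => decide (b < a)) := by
    have hcast : l.countP (fun a => decide (b < a))
        = Multiset.countP (fun a => b < a) (Finset.univ.val.map f) := by
      conv_rhs => rw [← Multiset.sort_eq (Finset.univ.val.map f) (· ≤ ·), ← hl]
      rfl
    rw [hcast, Multiset.countP_map]
    have hsub : ({x, x₀} : Finset G) ⊆ Finset.univ.filter (fun y => b < f y) := by
      intro y hy
      simp only [Finset.mem_insert, Finset.mem_singleton] at hy
      rcases hy with rfl | rfl
      · exact Finset.mem_filter.mpr ⟨Finset.mem_univ _, hc⟩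
      · exact Finset.mem_filter.mpr ⟨Finset.mem_univ _, lt_of_lt_of_le hc (hmax x)⟩
    have hcard2 := Finset.card_le_card hsub
    rw [Finset.card_pair hx] at hcard2
    calc 2 ≤ (Finset.univ.filter (fun y => b < f y)).card := hcard2
      _ = _ := rfl
  omega

end nuLem

set_option maxHeartbeats 1000000 in
/-- general lower bound for `ν₂(f)` obtained from the covering argument. -/
theorem stmt_6 (G : Type*) [CommGroup G] [Fintype G] (hG : 2 ≤ Fintype.card G)
    (f : G → ℝ) (hf : PosDef (fun x => (f x : ℂ)))
    (G₁ : Type*) [CommGroup G₁] (η : G₁ →* (G →* ℂˣ))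
    (S : Finset G₁)
    (hS : (η : G₁ → (G →* ℂˣ)) '' (S : Set G₁) =
      Function.support (fourierT (fun x => (f x : ℂ))))
    (hcard : S.card = (Function.support (fourierT (fun x => (f x : ℂ)))).ncard)
    (h : G₁ → ℝ) (hh : (Function.support h).Finite)
    (hpos : ∀ z, 0 ≤ h z) (hne : h ≠ 0)
    (μ : ℕ)
    (hμ : μ = (Function.support
      (fun χ : G →* ℂˣ => ∑ᶠ z ∈ {z : G₁ | η z = χ}, h z)).ncard)
    (hμlt : μ < Fintype.card G)
    (C : ℝ) (hCpos : 0 < C)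
    (hC : ∀ z : G₁, C * h z ≤
      ∑ w ∈ S, (fourierT (fun x => (f x : ℂ)) ((η w)⁻¹)).re * h (w * z)) :
    nu f 2 ≥ nu f 1 +
      (Fintype.card G : ℝ) * (C - nu f 1) / ((Fintype.card G : ℝ) - μ) := by
  classical
  set N : ℕ := Fintype.card G with hN
  set F : (G →* ℂˣ) → ℂ := fourierT (fun x => (f x : ℂ)) with hFdef
  set Fr : (G →* ℂˣ) → ℝ := fun σ => (F σ).re with hFrdef
  set g : (G →* ℂˣ) → ℝ := fun χ => ∑ᶠ z ∈ {z : G₁ | η z = χ}, h z with hgdef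
  -- basic facts about F
  have hFre : ∀ σ, F σ = ((Fr σ : ℝ) : ℂ) := by
    intro σ
    have h1 := (hf σ).1
    apply Complex.ext
    · simp [hFrdef]
    · simpa [hFrdef] using h1
  have hFrnn : ∀ σ, 0 ≤ Fr σ := fun σ => (hf σ).2
  have hFinv : ∀ σ, F (σ⁻¹) = F σ := by
    intro σ
    have hconj : (starRingEnd ℂ) (F σ) = F (σ⁻¹) := by
      rw [hFdef]
      unfold fourierT
      rw [map_mul, map_sum]
      congr 1
      · simp
      · refine Finset.sum_congr rfl fun x _ => ?_
        rw [map_mul, Complex.conj_conj, Complex.conj_ofReal, char_conj]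
        simp
    rw [← hconj, hFre σ, Complex.conj_ofReal]
  have hFrinv : ∀ σ, Fr (σ⁻¹) = Fr σ := by
    intro σ; rw [hFrdef]; simp only; rw [hFinv]
  -- the master finset
  set T : Finset G₁ := hh.toFinset with hTdef
  set U : Finset G₁ := T ∪ S.biUnion (fun w => T.image (fun t => w⁻¹ * t)) with hUdef
  have hTU : T ⊆ U := Finset.subset_union_left
  have hsuppU : Function.support h ⊆ ↑U := by
    intro z hz
    exact hTU (hh.mem_toFinset.mpr hz)
  -- g as a finite sum
  have hgU : ∀ χ, g χ = ∑ z ∈ U.filter (fun z => η z = χ), h z := by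
    intro χ
    rw [hgdef]
    refine finsum_mem_eq_sum_of_inter_support_eq h ?_
    ext z
    simp only [Set.mem_inter_iff, Set.mem_setOf_eq, Finset.coe_filter, Function.mem_support]
    constructor
    · rintro ⟨hz1, hz2⟩
      exact ⟨⟨hsuppU hz2, hz1⟩, hz2⟩
    · rintro ⟨⟨_, hz1⟩, hz2⟩
      exact ⟨hz1, hz2⟩
  have hgnn : ∀ χ, 0 ≤ g χ := by
    intro χ
    rw [hgU]
    exact Finset.sum_nonneg fun z _ => hpos z
  -- translation inequality
  have htrans : ∀ w ∈ S, ∀ χ, ∑ z ∈ U.filter (fun z => η z = χ), h (w * z) ≤ g (η w * χ) := by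
    intro w _ χ
    have himg : ∑ z ∈ U.filter (fun z => η z = χ), h (w * z)
        = ∑ z' ∈ (U.filter (fun z => η z = χ)).image (fun z => w * z), h z' := by
      rw [Finset.sum_image]
      intro a _ b _ hab
      exact mul_left_cancel hab
    set V : Finset G₁ := ((U.filter (fun z => η z = χ)).image (fun z => w * z))
        ∪ U.filter (fun z => η z = η w * χ) with hVdef
    have hgV : g (η w * χ) = ∑ z ∈ V, h z := by
      rw [hgdef]
      refine finsum_mem_eq_sum_of_inter_support_eq h ?_
      ext z
      simp only [Set.mem_inter_iff, Set.mem_setOf_eq, Function.mem_support, hVdef,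
        Finset.coe_union, Set.mem_union, Finset.coe_filter, Finset.coe_image,
        Set.mem_image, Set.mem_setOf_eq]
      constructor
      · rintro ⟨hz1, hz2⟩
        exact ⟨Or.inr ⟨hsuppU hz2, hz1⟩, hz2⟩
      · rintro ⟨hz1, hz2⟩
        refine ⟨?_, hz2⟩
        rcases hz1 with ⟨a, ⟨_, ha2⟩, rfl⟩ | ⟨_, hz⟩
        · rw [map_mul, ha2]
        · exact hz
    rw [himg, hgV]
    refine Finset.sum_le_sum_of_subset_of_nonneg ?_ (fun z _ _ => hpos z)
    exact Finset.subset_union_left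
  -- the image of S in the dual group
  set Sd : Finset (G →* ℂˣ) := S.image (fun w => η w) with hSddef
  have hSdcoe : ↑Sd = Function.support F := by
    rw [hSddef, Finset.coe_image]
    exact hS
  have hinj : Set.InjOn (fun w => η w) ↑S := by
    apply Finset.injOn_of_card_image_eq
    rw [← hSddef]
    rw [hcard, ← hSdcoe, Set.ncard_coe_finset]
  -- KEY 1 : C g(χ) ≤ ∑_σ Fr(σ⁻¹) g(σχ)
  have key1 : ∀ χ, C * g χ ≤ ∑ σ : G →* ℂˣ, Fr (σ⁻¹) * g (σ * χ) := by
    intro χ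
    have step1 : C * g χ ≤ ∑ w ∈ S, Fr ((η w)⁻¹) * g (η w * χ) := by
      calc C * g χ = ∑ z ∈ U.filter (fun z => η z = χ), C * h z := by
            rw [hgU, Finset.mul_sum]
        _ ≤ ∑ z ∈ U.filter (fun z => η z = χ),
              ∑ w ∈ S, Fr ((η w)⁻¹) * h (w * z) := by
            exact Finset.sum_le_sum fun z _ => hC z
        _ = ∑ w ∈ S, ∑ z ∈ U.filter (fun z => η z = χ), Fr ((η w)⁻¹) * h (w * z) :=
            Finset.sum_comm
        _ = ∑ w ∈ S, Fr ((η w)⁻¹) * ∑ z ∈ U.filter (fun z => η z = χ), h (w * z) := by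
            refine Finset.sum_congr rfl fun w _ => ?_
            rw [Finset.mul_sum]
        _ ≤ ∑ w ∈ S, Fr ((η w)⁻¹) * g (η w * χ) := by
            refine Finset.sum_le_sum fun w hw => ?_
            exact mul_le_mul_of_nonneg_left (htrans w hw χ) (hFrnn _)
    have step2 : ∑ w ∈ S, Fr ((η w)⁻¹) * g (η w * χ)
        = ∑ σ ∈ Sd, Fr (σ⁻¹) * g (σ * χ) := by
      rw [hSddef, Finset.sum_image (fun a ha b hb hab => hinj ha hb hab)]
    have step3 : ∑ σ ∈ Sd, Fr (σ⁻¹) * g (σ * χ)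
        = ∑ σ : G →* ℂˣ, Fr (σ⁻¹) * g (σ * χ) := by
      refine (Finset.sum_subset (Finset.subset_univ Sd) ?_).symm.symm
      intro σ _ hσ
      have : F σ = 0 := by
        by_contra hFσ
        exact hσ (by rw [← Finset.mem_coe, hSdcoe]; exact hFσ)
      have : Fr (σ⁻¹) = 0 := by rw [hFrinv, hFrdef]; simp [this]
      rw [this, zero_mul]
    rw [step2, step3] at step1
    exact step1
  -- complex quantities
  set gc : (G →* ℂˣ) → ℂ := fun χ => ((g χ : ℝ) : ℂ) with hgcdef
  set gh : G → ℂ := fun x => ∑ ρ : G →* ℂˣ, gc ρ * ((ρ x : ℂ)) with hghdef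
  set Sg2 : ℝ := ∑ χ : G →* ℂˣ, (g χ)^2 with hSgdef
  set Q : ℝ := ∑ χ : G →* ℂˣ, (∑ σ : G →* ℂˣ, Fr (σ⁻¹) * g (σ * χ)) * g χ with hQdef
  have hCQ : C * Sg2 ≤ Q := by
    rw [hSgdef, hQdef, Finset.mul_sum]
    refine Finset.sum_le_sum fun χ _ => ?_
    have h2 : C * g χ * g χ ≤ (∑ σ : G →* ℂˣ, Fr (σ⁻¹) * g (σ * χ)) * g χ :=
      mul_le_mul_of_nonneg_right (key1 χ) (hgnn χ)
    calc C * g χ ^ 2 = C * g χ * g χ := by ring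
      _ ≤ _ := h2
  have hconjgh : ∀ x, (starRingEnd ℂ) (gh x)
      = ∑ χ : G →* ℂˣ, gc χ * (starRingEnd ℂ) ((χ x : ℂ)) := by
    intro x
    rw [hghdef]
    simp only [map_sum, map_mul]
    refine Finset.sum_congr rfl fun ρ _ => ?_
    rw [hgcdef]
    simp [Complex.conj_ofReal]
  -- the common triple sum
  set E : ℂ := ∑ x : G, ∑ χ : G →* ℂˣ, ∑ ρ : G →* ℂˣ,
      (N : ℂ)⁻¹ * (f x : ℂ) * (starRingEnd ℂ) ((χ x : ℂ)) * ((ρ x : ℂ)) * gc ρ * gc χ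
      with hEdef
  have hQE : ((Q : ℝ) : ℂ) = E := by
    rw [hQdef, hEdef]
    push_cast
    calc ∑ χ : G →* ℂˣ, (∑ σ : G →* ℂˣ, (Fr (σ⁻¹) : ℂ) * (g (σ * χ) : ℂ)) * (g χ : ℂ)
        = ∑ χ : G →* ℂˣ, (∑ ρ : G →* ℂˣ, F (χ * ρ⁻¹) * gc ρ) * gc χ := by
          refine Finset.sum_congr rfl fun χ _ => ?_
          congr 1
          refine Fintype.sum_equiv (Equiv.mulRight χ)
            (fun σ => ((Fr (σ⁻¹) : ℝ) : ℂ) * ((g (σ * χ) : ℝ) : ℂ))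
            (fun ρ => F (χ * ρ⁻¹) * gc ρ) fun σ => ?_
          have hgrp : χ * (σ * χ)⁻¹ = σ⁻¹ := by
            ext x
            simp
          simp only [Equiv.coe_mulRight, hgrp]
          rw [← hFre, hgcdef]
      _ = ∑ χ : G →* ℂˣ, ∑ ρ : G →* ℂˣ, ∑ x : G,
            (N : ℂ)⁻¹ * (f x : ℂ) * (starRingEnd ℂ) ((χ x : ℂ)) * ((ρ x : ℂ)) * gc ρ * gc χ := by
          refine Finset.sum_congr rfl fun χ _ => ?_
          rw [Finset.sum_mul]
          refine Finset.sum_congr rfl fun ρ _ => ?_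
          have hFval : F (χ * ρ⁻¹)
              = (N : ℂ)⁻¹ * ∑ x : G, (f x : ℂ) * ((starRingEnd ℂ) ((χ x : ℂ)) * ((ρ x : ℂ))) := by
            rw [hFdef]
            unfold fourierT
            rw [hN]
            congr 1
            refine Finset.sum_congr rfl fun x _ => ?_
            congr 1
            have hmul : (((χ * ρ⁻¹) x : ℂ)) = ((χ x : ℂ)) * ((ρ⁻¹ x : ℂ)) := by
              simp [Units.val_mul]
            rw [hmul, map_mul, char_conj ρ⁻¹ x]
            simp
          rw [hFval, Finset.mul_sum, Finset.sum_mul, Finset.sum_mul]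
          refine Finset.sum_congr rfl fun x _ => ?_
          ring
      _ = ∑ χ : G →* ℂˣ, ∑ x : G, ∑ ρ : G →* ℂˣ,
            (N : ℂ)⁻¹ * (f x : ℂ) * (starRingEnd ℂ) ((χ x : ℂ)) * ((ρ x : ℂ)) * gc ρ * gc χ := by
          refine Finset.sum_congr rfl fun χ _ => ?_
          exact Finset.sum_comm
      _ = _ := Finset.sum_comm
  have hNne : ((N : ℝ)) ≠ 0 := by
    have : 0 < N := by omega
    positivity
  have hQreal : Q = (N : ℝ)⁻¹ * ∑ x : G, f x * Complex.normSq (gh x) := by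
    have hE2 : E = (((N : ℝ)⁻¹ * ∑ x : G, f x * Complex.normSq (gh x) : ℝ) : ℂ) := by
      rw [hEdef]
      push_cast
      rw [Finset.mul_sum]
      refine Finset.sum_congr rfl fun x _ => ?_
      have hnsq : ((Complex.normSq (gh x) : ℝ) : ℂ) = (starRingEnd ℂ) (gh x) * gh x := by
        rw [Complex.normSq_eq_conj_mul_self]
      rw [hnsq, hconjgh x, hghdef]
      simp only
      rw [Finset.sum_mul_sum]
      rw [Finset.mul_sum]
      rw [Finset.mul_sum]
      refine Finset.sum_congr rfl fun χ _ => ?_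
      rw [Finset.mul_sum, Finset.mul_sum]
      refine Finset.sum_congr rfl fun ρ _ => ?_
      ring
    have := hQE.trans hE2
    exact_mod_cast this
  have hPars : ∑ x : G, Complex.normSq (gh x) = (N : ℝ) * Sg2 := by
    rw [hSgdef]
    have hc : ((∑ x : G, Complex.normSq (gh x) : ℝ) : ℂ)
        = (((N : ℝ) * ∑ χ : G →* ℂˣ, (g χ)^2 : ℝ) : ℂ) := by
      push_cast
      calc ∑ x : G, ((Complex.normSq (gh x) : ℝ) : ℂ)
          = ∑ x : G, ∑ χ : G →* ℂˣ, ∑ ρ : G →* ℂˣ,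
              gc χ * gc ρ * ((starRingEnd ℂ) ((χ x : ℂ)) * ((ρ x : ℂ))) := by
            refine Finset.sum_congr rfl fun x _ => ?_
            rw [Complex.normSq_eq_conj_mul_self, hconjgh x, hghdef]
            simp only
            rw [Finset.sum_mul_sum]
            refine Finset.sum_congr rfl fun χ _ => ?_
            refine Finset.sum_congr rfl fun ρ _ => ?_
            ring
        _ = ∑ χ : G →* ℂˣ, ∑ ρ : G →* ℂˣ, gc χ * gc ρ *
              ∑ x : G, (starRingEnd ℂ) ((χ x : ℂ)) * ((ρ x : ℂ)) := by
            rw [Finset.sum_comm]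
            refine Finset.sum_congr rfl fun χ _ => ?_
            rw [Finset.sum_comm]
            refine Finset.sum_congr rfl fun ρ _ => ?_
            rw [Finset.mul_sum]
        _ = ∑ χ : G →* ℂˣ, gc χ * gc χ * (N : ℂ) := by
            refine Finset.sum_congr rfl fun χ _ => ?_
            rw [Finset.sum_eq_single χ]
            · rw [char_ortho]; simp [hN]
            · intro ρ _ hρ
              rw [char_ortho]
              simp [hρ]
            · intro habs
              exact absurd (Finset.mem_univ χ) habs
        _ = (N : ℂ) * ∑ χ : G →* ℂˣ, ((g χ : ℝ) : ℂ) ^ 2 := by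
            rw [Finset.mul_sum]
            refine Finset.sum_congr rfl fun χ _ => ?_
            rw [hgcdef]
            ring
    exact_mod_cast hc
  -- pointwise bound on gh
  have hpoint : ∀ x : G, Complex.normSq (gh x) ≤ (∑ χ : G →* ℂˣ, g χ) ^ 2 := by
    intro x
    have habs : ‖gh x‖ ≤ ∑ χ : G →* ℂˣ, g χ := by
      rw [hghdef]
      refine le_trans (norm_sum_le _ _) ?_
      refine le_of_eq (Finset.sum_congr rfl fun χ _ => ?_)
      rw [norm_mul, char_abs, mul_one, hgcdef]
      simp only
      exact Complex.norm_of_nonneg (hgnn χ)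
    have h1 : Complex.normSq (gh x) = (‖gh x‖) ^ 2 := Complex.normSq_eq_norm_sq _
    rw [h1]
    exact pow_le_pow_left₀ (norm_nonneg _) habs 2
  -- Cauchy-Schwarz with the support of g
  set sup : Finset (G →* ℂˣ) := Finset.univ.filter (fun χ => g χ ≠ 0) with hsupdef
  have hsupcard : sup.card = μ := by
    have hsupp : Function.support g = ↑sup := by
      ext χ
      simp [hsupdef, Function.mem_support]
    rw [hμ, hsupp, Set.ncard_coe_finset]
  have hCS : (∑ χ : G →* ℂˣ, g χ) ^ 2 ≤ (μ : ℝ) * Sg2 := by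
    have h1 : ∑ χ : G →* ℂˣ, g χ = ∑ χ ∈ sup, g χ := by
      rw [hsupdef]
      exact (Finset.sum_filter_ne_zero _).symm
    have h2 : (∑ χ ∈ sup, (1 : ℝ) * g χ) ^ 2
        ≤ (∑ χ ∈ sup, (1:ℝ) ^ 2) * ∑ χ ∈ sup, (g χ) ^ 2 :=
      Finset.sum_mul_sq_le_sq_mul_sq sup _ _
    simp only [one_mul, one_pow, Finset.sum_const, nsmul_eq_mul, mul_one] at h2
    have h3 : ∑ χ ∈ sup, (g χ) ^ 2 ≤ Sg2 := by
      rw [hSgdef]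
      refine Finset.sum_le_sum_of_subset_of_nonneg (Finset.subset_univ _) ?_
      intro χ _ _
      positivity
    rw [h1]
    calc (∑ χ ∈ sup, g χ) ^ 2 ≤ (sup.card : ℝ) * ∑ χ ∈ sup, (g χ) ^ 2 := h2
      _ ≤ (μ : ℝ) * Sg2 := by
          rw [hsupcard]
          exact mul_le_mul_of_nonneg_left h3 (by positivity)
  -- positivity of Sg2
  have hSgpos : 0 < Sg2 := by
    obtain ⟨z, hz⟩ := Function.ne_iff.mp hne
    have hzT : z ∈ U.filter (fun z' => η z' = η z) := by
      refine Finset.mem_filter.mpr ⟨hTU ?_, rfl⟩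
      exact hh.mem_toFinset.mpr hz
    have hgz : h z ≤ g (η z) := by
      rw [hgU]
      exact Finset.single_le_sum (fun z' _ => hpos z') hzT
    have hhz : 0 < h z := lt_of_le_of_ne (hpos z) (Ne.symm hz)
    have hgzpos : 0 < g (η z) := lt_of_lt_of_le hhz hgz
    have : g (η z) ^ 2 ≤ Sg2 := by
      rw [hSgdef]
      exact Finset.single_le_sum (f := fun χ => g χ ^ 2) (fun χ _ => by positivity)
        (Finset.mem_univ (η z))
    nlinarith
  -- the maximizer
  obtain ⟨x₀, hx₀⟩ := exists_nu_one f (by omega)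
  have hmax : ∀ x, f x ≤ f x₀ := by
    intro x
    rw [hx₀]
    exact le_nu_one f (by omega) x
  have hν21 : nu f 2 ≤ nu f 1 := nu_le_nu f hG
  have hsum : ∑ x : G, f x * Complex.normSq (gh x)
      ≤ (nu f 1 - nu f 2) * Complex.normSq (gh x₀)
        + nu f 2 * ∑ x : G, Complex.normSq (gh x) := by
    have hsplit : ∑ x : G, f x * Complex.normSq (gh x)
        = f x₀ * Complex.normSq (gh x₀)
          + ∑ x ∈ Finset.univ.erase x₀, f x * Complex.normSq (gh x) :=
      (Finset.add_sum_erase _ _ (Finset.mem_univ x₀)).symm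
    have hsplit2 : ∑ x : G, Complex.normSq (gh x)
        = Complex.normSq (gh x₀) + ∑ x ∈ Finset.univ.erase x₀, Complex.normSq (gh x) :=
      (Finset.add_sum_erase _ _ (Finset.mem_univ x₀)).symm
    have hbound : ∑ x ∈ Finset.univ.erase x₀, f x * Complex.normSq (gh x)
        ≤ ∑ x ∈ Finset.univ.erase x₀, nu f 2 * Complex.normSq (gh x) := by
      refine Finset.sum_le_sum fun x hx => ?_
      have hxne : x ≠ x₀ := (Finset.mem_erase.mp hx).1
      exact mul_le_mul_of_nonneg_right (le_nu_two f hG x₀ hmax x hxne) (Complex.normSq_nonneg _)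
    rw [← Finset.mul_sum] at hbound
    rw [hsplit, hsplit2, hx₀]
    nlinarith [hbound, Complex.normSq_nonneg (gh x₀)]
  -- putting it together
  have hnsq0 : Complex.normSq (gh x₀) ≤ (μ : ℝ) * Sg2 := le_trans (hpoint x₀) hCS
  have hmain : (N : ℝ) * C * Sg2 ≤ (nu f 1 - nu f 2) * ((μ : ℝ) * Sg2) + nu f 2 * ((N : ℝ) * Sg2) := by
    have h1 : (N : ℝ) * (C * Sg2) ≤ (N : ℝ) * Q :=
      mul_le_mul_of_nonneg_left hCQ (by positivity)
    have h2 : (N : ℝ) * Q = ∑ x : G, f x * Complex.normSq (gh x) := by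
      rw [hQreal, ← mul_assoc, mul_inv_cancel₀ hNne, one_mul]
    rw [h2] at h1
    have h3 := le_trans h1 hsum
    rw [hPars] at h3
    have h4 : (nu f 1 - nu f 2) * Complex.normSq (gh x₀)
        ≤ (nu f 1 - nu f 2) * ((μ : ℝ) * Sg2) :=
      mul_le_mul_of_nonneg_left hnsq0 (by linarith)
    calc (N : ℝ) * C * Sg2 = (N : ℝ) * (C * Sg2) := by ring
      _ ≤ _ := by linarith
  have hfinal : (N : ℝ) * C ≤ (nu f 1 - nu f 2) * (μ : ℝ) + nu f 2 * (N : ℝ) := by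
    have := le_of_mul_le_mul_right (by nlinarith [hmain] :
      ((N : ℝ) * C) * Sg2 ≤ ((nu f 1 - nu f 2) * (μ : ℝ) + nu f 2 * (N : ℝ)) * Sg2) hSgpos
    exact this
  have hD : (0 : ℝ) < (N : ℝ) - (μ : ℝ) := by
    have : (μ : ℝ) < (N : ℝ) := by exact_mod_cast hμlt
    linarith
  rw [ge_iff_le, ← sub_nonneg]
  have hgoal : (N : ℝ) * (C - nu f 1) / ((N : ℝ) - (μ : ℝ)) ≤ nu f 2 - nu f 1 := by
    rw [div_le_iff₀ hD]
    nlinarith [hfinal]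
  linarith [hgoal]
end

section
/- Let G be a finite abelian group and f : G → ℝ a real-valued positive definite function whose Fourier support is written as supp(f̂) = {χ₁, χ₁⁻¹, …, χ_r, χ_r⁻¹, χ_{r+1}, …, χ_{r+t}} with these 2r+t characters pairwise distinct, χ_i² ≠ 1 for 1 ≤ i ≤ r and χ_{r+j}² = 1 for 1 ≤ j ≤ t, and assume r ≥ 1. Let G₁ = ℤ^r × (ℤ/2ℤ)^t, let η : G₁ → Ĝ be the homomorphism η(m₁,…,m_{r+t}) = Π_{i=1}^{r+t} χ_i^{m_i}, and let S = {±e₁,…,±e_r, e_{r+1},…,e_{r+t}} where e_i is the i-th standard generator of G₁. Fix positive integers m₁,…,m_r and define h₀ : G₁ → ℝ by h₀(x₁,…,x_{r+t}) = Π_{i=1}^{r} sin(π·x_i/m_i) if 1 ≤ x_i ≤ m_i − 1 for every 1 ≤ i ≤ r, and h₀(x) = 0 otherwise. Then for every x ∈ G₁, (M_f^{G₁}(h₀))(x) ≥ (2·Σ_{i=1}^{r} cos(π/m_i)·f̂(χ_i) + Σ_{j=1}^{t} f̂(χ_{r+j}))·h₀(x). -/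
open Complex Finset

/-- The auxiliary function `h₀` on `G₁ = ℤ^r × (ℤ/2ℤ)^t`:
`h₀(x) = ∏_{i=1}^r sin(π x_i/m_i)` if `1 ≤ x_i ≤ m_i - 1` for all `i`, else `0`. -/
noncomputable def h0 (r t : ℕ) (m : Fin r → ℕ) :
    ((Fin r → ℤ) × (Fin t → ZMod 2)) → ℝ := fun x =>
  open Classical in
  if ∀ i : Fin r, 1 ≤ x.1 i ∧ x.1 i ≤ (m i : ℤ) - 1
    then ∏ i : Fin r, Real.sin (Real.pi * (x.1 i : ℝ) / (m i : ℝ)) else 0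


lemma conj_chi {G : Type*} [CommGroup G] [Fintype G] (χ : G →* ℂˣ) (x : G) :
    (starRingEnd ℂ) ((χ x : ℂ)) = ((χ x : ℂ))⁻¹ := by
  have hz : ((χ x : ℂ)) ^ (Fintype.card G) = 1 := by
    have : χ (x ^ Fintype.card G) = 1 := by rw [pow_card_eq_one, map_one]
    have := congrArg (Units.val) this
    rwa [map_pow, Units.val_pow_eq_pow_val] at this
  have habs : ‖((χ x : ℂ))‖ = 1 := by
    have h1 : ‖((χ x : ℂ))‖ ^ (Fintype.card G) = 1 := by
      rw [← norm_pow, hz, norm_one]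
    have hn : Fintype.card G ≠ 0 := Fintype.card_ne_zero
    exact (pow_left_inj₀ (norm_nonneg _) zero_le_one hn).mp (by rw [h1, one_pow])
  rw [← Complex.inv_eq_conj habs]


noncomputable def sfun (m : ℕ) (y : ℤ) : ℝ :=
  open Classical in
  if 1 ≤ y ∧ y ≤ (m : ℤ) - 1 then Real.sin (Real.pi * (y : ℝ) / (m : ℝ)) else 0

lemma sfun_eq_sin (m : ℕ) (hm : 0 < m) (y : ℤ) (h0 : 0 ≤ y) (h1 : y ≤ (m:ℤ)) :
    sfun m y = Real.sin (Real.pi * (y : ℝ) / (m : ℝ)) := by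
  unfold sfun
  split
  · rfl
  · rename_i h
    rcases (not_and_or.mp h) with h | h
    · have : y = 0 := by omega
      simp [this]
    · have : y = (m:ℤ) := by omega
      subst this
      have hm' : (m:ℝ) ≠ 0 := by positivity
      push_cast
      rw [mul_div_assoc, div_self hm', mul_one, Real.sin_pi]

lemma sfun_nonneg (m : ℕ) (y : ℤ) : 0 ≤ sfun m y := by
  unfold sfun
  split
  · rename_i h
    apply Real.sin_nonneg_of_nonneg_of_le_pi
    · have : (0:ℝ) ≤ (y:ℝ) := by exact_mod_cast le_trans zero_le_one h.1
      have : (0:ℝ) ≤ (m:ℝ) := by positivity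
      positivity
    · have hm : (1:ℤ) ≤ (m:ℤ) := by linarith [h.1, h.2]
      have hy : (y:ℝ) ≤ (m:ℝ) := by exact_mod_cast le_trans h.2 (by linarith)
      have hm' : (0:ℝ) < (m:ℝ) := by exact_mod_cast hm
      rw [div_le_iff₀ hm']
      nlinarith [Real.pi_pos]
  · exact le_refl 0

lemma sfun_key (m : ℕ) (hm : 0 < m) (y : ℤ) :
    2 * Real.cos (Real.pi / (m:ℝ)) * sfun m y ≤ sfun m (y + 1) + sfun m (y - 1) := by
  by_cases h : 1 ≤ y ∧ y ≤ (m:ℤ) - 1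
  · have h1 : sfun m (y+1) = Real.sin (Real.pi * ((y:ℝ)+1) / (m:ℝ)) := by
      rw [sfun_eq_sin m hm _ (by omega) (by omega)]; push_cast; ring_nf
    have h2 : sfun m (y-1) = Real.sin (Real.pi * ((y:ℝ)-1) / (m:ℝ)) := by
      rw [sfun_eq_sin m hm _ (by omega) (by omega)]; push_cast; ring_nf
    have h3 : sfun m y = Real.sin (Real.pi * (y:ℝ) / (m:ℝ)) := by
      rw [sfun_eq_sin m hm _ (by omega) (by omega)]
    rw [h1, h2, h3]
    have hm' : ((m:ℝ)) ≠ 0 := by positivity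
    have e1 : Real.pi * ((y:ℝ)+1) / (m:ℝ) = Real.pi * (y:ℝ)/(m:ℝ) + Real.pi/(m:ℝ) := by
      field_simp
    have e2 : Real.pi * ((y:ℝ)-1) / (m:ℝ) = Real.pi * (y:ℝ)/(m:ℝ) - Real.pi/(m:ℝ) := by
      field_simp
    rw [e1, e2, Real.sin_add, Real.sin_sub]
    ring_nf
    exact le_refl _
  · have : sfun m y = 0 := by unfold sfun; rw [if_neg h]
    rw [this, mul_zero]
    exact add_nonneg (sfun_nonneg _ _) (sfun_nonneg _ _)


lemma fourier_inv {G : Type*} [CommGroup G] [Fintype G] (f : G → ℝ) (χ : G →* ℂˣ) :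
    fourierT (fun x => (f x : ℂ)) χ⁻¹ =
      (starRingEnd ℂ) (fourierT (fun x => (f x : ℂ)) χ) := by
  unfold fourierT
  rw [map_mul, map_sum]
  congr 1
  · simp
  · apply Finset.sum_congr rfl
    intro x _
    simp only [map_mul, Complex.conj_ofReal, Complex.conj_conj, MonoidHom.inv_apply,
      Units.val_inv_eq_inv_val, map_inv₀, conj_chi, inv_inv]

lemma h0_eq_prod (r t : ℕ) (m : Fin r → ℕ) (x : (Fin r → ℤ) × (Fin t → ZMod 2)) :
    h0 r t m x = ∏ i : Fin r, sfun (m i) (x.1 i) := by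
  unfold h0
  by_cases h : ∀ i : Fin r, 1 ≤ x.1 i ∧ x.1 i ≤ (m i : ℤ) - 1
  · rw [if_pos h]
    exact Finset.prod_congr rfl (fun i _ => by unfold sfun; rw [if_pos (h i)])
  · rw [if_neg h]
    obtain ⟨i, hi⟩ := not_forall.mp h
    have : sfun (m i) (x.1 i) = 0 := by unfold sfun; rw [if_neg hi]
    exact (Finset.prod_eq_zero (mem_univ i) this).symm

/-- the auxiliary function satisfies
`M_f^{G₁}(h₀)(x) ≥ (2 Σᵢ cos(π/mᵢ) f̂(χᵢ) + Σⱼ f̂(χ_{r+j})) h₀(x)` for all `x ∈ G₁`,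
where `M_f^{G₁}(h₀)(x) = Σ_{w ∈ S} f̂(η(w)⁻¹) h₀(w + x)` for
`S = {±e₁, …, ±e_r, e_{r+1}, …, e_{r+t}}` (the sum over `S` being written out
explicitly, with `η(±eᵢ) = χᵢ^{±1}` and `η(e_{r+j}) = ψⱼ`). -/
theorem stmt_7 (G : Type*) [CommGroup G] [Fintype G]
    (f : G → ℝ) (hf : PosDef (fun x => (f x : ℂ)))
    (r t : ℕ) (hr : 1 ≤ r)
    (χ : Fin r → (G →* ℂˣ)) (ψ : Fin t → (G →* ℂˣ))
    (hχinj : Function.Injective χ) (hψinj : Function.Injective ψ)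
    (hχ2 : ∀ i, (χ i) ^ 2 ≠ 1) (hψ2 : ∀ j, (ψ j) ^ 2 = 1)
    (hχinv : ∀ i j, χ i ≠ (χ j)⁻¹) (hχψ : ∀ i j, χ i ≠ ψ j)
    (hsupp : Function.support (fourierT (fun x => (f x : ℂ))) =
      Set.range χ ∪ Set.range (fun i => (χ i)⁻¹) ∪ Set.range ψ)
    (m : Fin r → ℕ) (hm : ∀ i, 0 < m i) :
    ∀ x : (Fin r → ℤ) × (Fin t → ZMod 2),
      (∑ i : Fin r,
          ((fourierT (fun y => (f y : ℂ)) ((χ i)⁻¹)).re *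
              h0 r t m (((Pi.single i 1, 0) : (Fin r → ℤ) × (Fin t → ZMod 2)) + x) +
            (fourierT (fun y => (f y : ℂ)) (χ i)).re *
              h0 r t m (-((Pi.single i 1, 0) : (Fin r → ℤ) × (Fin t → ZMod 2)) + x))) +
        (∑ j : Fin t,
          (fourierT (fun y => (f y : ℂ)) ((ψ j)⁻¹)).re *
            h0 r t m (((0, Pi.single j 1) : (Fin r → ℤ) × (Fin t → ZMod 2)) + x)) ≥
      (2 * ∑ i : Fin r, Real.cos (Real.pi / (m i : ℝ)) *
          (fourierT (fun y => (f y : ℂ)) (χ i)).re +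
        ∑ j : Fin t, (fourierT (fun y => (f y : ℂ)) (ψ j)).re) * h0 r t m x := by
  intro x
  set c : Fin r → ℝ := fun i => (fourierT (fun y => (f y : ℂ)) (χ i)).re with hcdef
  have hc : ∀ i, (fourierT (fun y => (f y : ℂ)) ((χ i)⁻¹)).re = c i := by
    intro i
    rw [fourier_inv f (χ i)]
    exact Complex.conj_re _
  have hcnn : ∀ i, 0 ≤ c i := fun i => (hf (χ i)).2
  have hd : ∀ j, (fourierT (fun y => (f y : ℂ)) ((ψ j)⁻¹)).re
      = (fourierT (fun y => (f y : ℂ)) (ψ j)).re := by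
    intro j
    rw [fourier_inv f (ψ j)]
    exact Complex.conj_re _
  set P : Fin r → ℝ := fun i => ∏ k ∈ Finset.univ.erase i, sfun (m k) (x.1 k) with hPdef
  have hPnn : ∀ i, 0 ≤ P i := fun i => Finset.prod_nonneg (fun k _ => sfun_nonneg _ _)
  have hx0 : ∀ i, h0 r t m x = sfun (m i) (x.1 i) * P i := by
    intro i
    rw [h0_eq_prod, ← Finset.mul_prod_erase Finset.univ _ (mem_univ i)]
  have hxp : ∀ i : Fin r,
      h0 r t m (((Pi.single i 1, 0) : (Fin r → ℤ) × (Fin t → ZMod 2)) + x)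
        = sfun (m i) (x.1 i + 1) * P i := by
    intro i
    rw [h0_eq_prod, ← Finset.mul_prod_erase Finset.univ _ (mem_univ i)]
    have h1 : (((Pi.single i 1, 0) : (Fin r → ℤ) × (Fin t → ZMod 2)) + x).1 i
        = x.1 i + 1 := by
      simp only [Prod.fst_add, Pi.add_apply, Pi.single_eq_same]; omega
    rw [h1]
    congr 1
    apply Finset.prod_congr rfl
    intro k hk
    have hki : k ≠ i := (Finset.mem_erase.mp hk).1
    have h2 : (((Pi.single i 1, 0) : (Fin r → ℤ) × (Fin t → ZMod 2)) + x).1 k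
        = x.1 k := by
      simp only [Prod.fst_add, Pi.add_apply, Pi.single_eq_of_ne hki]; omega
    rw [h2]
  have hxm : ∀ i : Fin r,
      h0 r t m (-((Pi.single i 1, 0) : (Fin r → ℤ) × (Fin t → ZMod 2)) + x)
        = sfun (m i) (x.1 i - 1) * P i := by
    intro i
    rw [h0_eq_prod, ← Finset.mul_prod_erase Finset.univ _ (mem_univ i)]
    have h1 : ((-((Pi.single i 1, 0) : (Fin r → ℤ) × (Fin t → ZMod 2))) + x).1 i
        = x.1 i - 1 := by
      simp only [Prod.fst_add, Prod.fst_neg, Pi.add_apply, Pi.neg_apply,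
        Pi.single_eq_same]; omega
    rw [h1]
    congr 1
    apply Finset.prod_congr rfl
    intro k hk
    have hki : k ≠ i := (Finset.mem_erase.mp hk).1
    have h2 : ((-((Pi.single i 1, 0) : (Fin r → ℤ) × (Fin t → ZMod 2))) + x).1 k
        = x.1 k := by
      simp only [Prod.fst_add, Prod.fst_neg, Pi.add_apply, Pi.neg_apply,
        Pi.single_eq_of_ne hki]; omega
    rw [h2]
  have hxψ : ∀ j : Fin t,
      h0 r t m (((0, Pi.single j 1) : (Fin r → ℤ) × (Fin t → ZMod 2)) + x)
        = h0 r t m x := by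
    intro j
    rw [h0_eq_prod, h0_eq_prod]
    apply Finset.prod_congr rfl
    intro k _
    have : (((0, Pi.single j 1) : (Fin r → ℤ) × (Fin t → ZMod 2)) + x).1 k
        = x.1 k := by
      simp only [Prod.fst_add, Pi.add_apply, Pi.zero_apply]; omega
    rw [this]
  simp only [hc, hd, hxp, hxm, hxψ]
  have key : ∀ i ∈ Finset.univ (α := Fin r),
      2 * Real.cos (Real.pi / (m i : ℝ)) * c i * h0 r t m x
        ≤ c i * (sfun (m i) (x.1 i + 1) * P i) + c i * (sfun (m i) (x.1 i - 1) * P i) := by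
    intro i _
    rw [hx0 i]
    have h1 := sfun_key (m i) (hm i) (x.1 i)
    have h2 : 0 ≤ c i * P i := mul_nonneg (hcnn i) (hPnn i)
    nlinarith [mul_le_mul_of_nonneg_right h1 h2]
  have hsum := Finset.sum_le_sum key
  have e1 : (2 * ∑ i : Fin r, Real.cos (Real.pi / (m i : ℝ)) * c i +
        ∑ j : Fin t, (fourierT (fun y => (f y : ℂ)) (ψ j)).re) * h0 r t m x
      = (∑ i : Fin r, 2 * Real.cos (Real.pi / (m i : ℝ)) * c i * h0 r t m x)
        + (∑ j : Fin t, (fourierT (fun y => (f y : ℂ)) (ψ j)).re * h0 r t m x) := by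
    rw [add_mul, Finset.mul_sum, Finset.sum_mul, Finset.sum_mul]
    congr 1
    exact Finset.sum_congr rfl fun i _ => by ring
  rw [ge_iff_le, e1]
  exact add_le_add hsum (le_refl _)
end

section
/- Let d be a positive integer and c > 0 a real number, and define θ : [1, ∞) → ℝ by θ(x) = x²·(1 − c·(x − 1)^d). Then θ attains its maximum on [1, ∞), and every maximizer x₀ of θ on [1, ∞) satisfies (2/(2c + c·d))^{1/d} < x₀ < (2/(2c + c·d))^{1/d} + 1. -/
set_option maxHeartbeats 1600000 in
/-- `θ(x) = x²(1 − c(x−1)^d)` attains its maximum on `[1, ∞)`, and every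
maximizer `x₀` satisfies `(2/(2c+cd))^{1/d} < x₀ < (2/(2c+cd))^{1/d} + 1`. -/
theorem stmt_11 (d : ℕ) (hd : 0 < d) (c : ℝ) (hc : 0 < c) :
    (∃ x₀ ∈ Set.Ici (1 : ℝ),
      IsMaxOn (fun x : ℝ => x ^ 2 * (1 - c * (x - 1) ^ d)) (Set.Ici 1) x₀) ∧
    ∀ x₀ ∈ Set.Ici (1 : ℝ),
      IsMaxOn (fun x : ℝ => x ^ 2 * (1 - c * (x - 1) ^ d)) (Set.Ici 1) x₀ →
        (2 / (2 * c + c * d)) ^ ((1 : ℝ) / d) < x₀ ∧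
          x₀ < (2 / (2 * c + c * d)) ^ ((1 : ℝ) / d) + 1 := by
  obtain ⟨k, rfl⟩ : ∃ k, d = k + 1 := ⟨d - 1, (Nat.succ_pred_eq_of_pos hd).symm⟩
  set F : ℝ → ℝ := fun x : ℝ => x ^ 2 * (1 - c * (x - 1) ^ (k + 1)) with hF
  set fd : ℝ → ℝ :=
    fun x : ℝ => x * (2 - c * (x - 1) ^ k * (2 * (x - 1) + ((k : ℝ) + 1) * x)) with hfd
  have hFcont : Continuous F := by fun_prop
  have hfdcont : Continuous fd := by fun_prop
  have hderiv : ∀ x : ℝ, HasDerivAt F (fd x) x := by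
    intro x
    have h1 : HasDerivAt (fun x : ℝ => x ^ 2) (2 * x) x := by
      simpa using hasDerivAt_pow 2 x
    have h2 : HasDerivAt (fun x : ℝ => (x - 1) ^ (k + 1))
        (((k : ℝ) + 1) * (x - 1) ^ k) x := by
      have := ((hasDerivAt_id x).sub_const 1).fun_pow (k + 1)
      simpa using this
    have h3 := h1.fun_mul ((h2.const_mul c).const_sub 1)
    convert h3 using 1
    · rfl
    · rfl
    simp only [hfd]
    ring
  -- the threshold
  set A : ℝ := 2 / (2 * c + c * ((k : ℝ) + 1)) with hAdef
  have hA : 0 < A := by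
    apply div_pos (by norm_num)
    have : (0 : ℝ) ≤ (k : ℝ) := Nat.cast_nonneg k
    nlinarith
  set r : ℝ := A ^ ((1 : ℝ) / ((k : ℝ) + 1)) with hrdef
  have hr : 0 < r := Real.rpow_pos_of_pos hA _
  have hrpow : r ^ (k + 1) = A := by
    rw [hrdef, ← Real.rpow_natCast (A ^ ((1:ℝ) / ((k:ℝ)+1))) (k+1),
      ← Real.rpow_mul hA.le]
    push_cast
    rw [one_div_mul_cancel (by positivity), Real.rpow_one]
  have hkey : c * ((k : ℝ) + 3) * r ^ (k + 1) = 2 := by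
    rw [hrpow, hAdef]
    have h0 : (2 : ℝ) * c + c * ((k : ℝ) + 1) ≠ 0 := by positivity
    field_simp
    ring
  have hrk : (0 : ℝ) < r ^ k := pow_pos hr k
  -- derivative positive on [1, r]
  have hpos : ∀ x : ℝ, 1 ≤ x → x ≤ r → 0 < fd x := by
    intro x hx1 hxr
    have hx0 : (0 : ℝ) < x := by linarith
    have hk0 : (0 : ℝ) ≤ (k : ℝ) := Nat.cast_nonneg k
    have h1 : (x - 1) ^ k ≤ r ^ k :=
      pow_le_pow_left₀ (by linarith) (by linarith) k
    have hT0 : (0 : ℝ) ≤ 2 * (x - 1) + ((k : ℝ) + 1) * x := by nlinarith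
    have hT : 2 * (x - 1) + ((k : ℝ) + 1) * x ≤ ((k : ℝ) + 3) * r - 2 := by nlinarith
    have h2 : c * (x - 1) ^ k * (2 * (x - 1) + ((k : ℝ) + 1) * x)
        ≤ c * r ^ k * (((k : ℝ) + 3) * r - 2) := by
      have h2a := mul_le_mul_of_nonneg_right
        (mul_le_mul_of_nonneg_left h1 hc.le) hT0
      have h2b := mul_le_mul_of_nonneg_left hT (mul_nonneg hc.le hrk.le)
      nlinarith [h2a, h2b]
    have h3 : c * r ^ k * (((k : ℝ) + 3) * r - 2) < 2 := by
      have : c * ((k : ℝ) + 3) * (r ^ k * r) = 2 := by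
        rw [← pow_succ]; exact hkey
      nlinarith
    have : c * (x - 1) ^ k * (2 * (x - 1) + ((k : ℝ) + 1) * x) < 2 := lt_of_le_of_lt h2 h3
    simp only [hfd]
    nlinarith
  -- derivative negative on [r+1, ∞)
  have hneg : ∀ x : ℝ, r + 1 ≤ x → fd x < 0 := by
    intro x hx
    have hx1 : (1 : ℝ) < x := by linarith
    have hk0 : (0 : ℝ) ≤ (k : ℝ) := Nat.cast_nonneg k
    have h1 : r ^ (k + 1) ≤ (x - 1) ^ (k + 1) :=
      pow_le_pow_left₀ hr.le (by linarith) (k + 1)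
    have hT : ((k : ℝ) + 3) * (x - 1) < 2 * (x - 1) + ((k : ℝ) + 1) * x := by nlinarith
    have hxk : (0 : ℝ) < (x - 1) ^ k := pow_pos (by linarith) k
    have h3 : 2 < c * (x - 1) ^ k * (2 * (x - 1) + ((k : ℝ) + 1) * x) := by
      have := mul_le_mul_of_nonneg_left h1 (by positivity : (0:ℝ) ≤ c * ((k:ℝ)+3))
      rw [hkey] at this
      calc (2 : ℝ) ≤ c * ((k : ℝ) + 3) * (x - 1) ^ (k + 1) := this
        _ = c * (x - 1) ^ k * (((k : ℝ) + 3) * (x - 1)) := by rw [pow_succ]; ring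
        _ < c * (x - 1) ^ k * (2 * (x - 1) + ((k : ℝ) + 1) * x) := by
            exact mul_lt_mul_of_pos_left hT (by positivity)
    simp only [hfd]
    nlinarith
  have hF1 : F 1 = 1 := by simp [hF]
  constructor
  · -- existence of a maximizer
    set M : ℝ := 1 + max 1 (1 / c) with hMdef
    have hM1 : (1 : ℝ) ≤ M := by
      rw [hMdef]
      have := le_max_left (1 : ℝ) (1 / c)
      linarith
    have hFle : ∀ x : ℝ, M ≤ x → F x ≤ 0 := by
      intro x hx
      have hx' : (1 : ℝ) + max 1 (1 / c) ≤ x := hx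
      have hm1 : (1 : ℝ) ≤ max 1 (1 / c) := le_max_left _ _
      have hmc : 1 / c ≤ max 1 (1 / c) := le_max_right _ _
      have h1 : max 1 (1 / c) ≤ (x - 1) ^ (k + 1) := by
        calc max 1 (1 / c) ≤ max 1 (1 / c) ^ (k + 1) :=
              le_self_pow₀ hm1 (Nat.succ_ne_zero k)
          _ ≤ (x - 1) ^ (k + 1) := pow_le_pow_left₀ (by linarith) (by linarith) _
      have h2 : 1 ≤ c * (x - 1) ^ (k + 1) := by
        have : 1 / c ≤ (x - 1) ^ (k + 1) := le_trans hmc h1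
        rw [div_le_iff₀ hc] at this
        nlinarith
      have : 1 - c * (x - 1) ^ (k + 1) ≤ 0 := by linarith
      exact mul_nonpos_of_nonneg_of_nonpos (by positivity) this
    obtain ⟨x₀, hx₀mem, hx₀⟩ :=
      isCompact_Icc.exists_isMaxOn (Set.nonempty_Icc.mpr hM1)
        (hFcont.continuousOn (s := Set.Icc 1 M))
    refine ⟨x₀, hx₀mem.1, ?_⟩
    intro x hx
    rcases le_or_gt x M with hxM | hxM
    · exact hx₀ ⟨hx, hxM⟩
    · have h1 : F x ≤ 0 := hFle x hxM.le
      have h2 : F 1 ≤ F x₀ := hx₀ ⟨le_refl 1, hM1⟩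
      simp only [Set.mem_setOf_eq]
      rw [hF1] at h2
      linarith
  · -- bounds on any maximizer
    intro x₀ hx₀ hmax
    simp only [Set.mem_Ici] at hx₀
    have hgr : (2 / (2 * c + c * ((k + 1 : ℕ) : ℝ))) ^ ((1 : ℝ) / ((k + 1 : ℕ) : ℝ)) = r := by
      push_cast; rfl
    rw [hgr]
    constructor
    · -- lower bound r < x₀
      by_contra hcon
      push_neg at hcon
      have hfd0 : 0 < fd x₀ := hpos x₀ hx₀ hcon
      have hopen : IsOpen {y : ℝ | 0 < fd y} := isOpen_lt continuous_const hfdcont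
      obtain ⟨ε, hε, hball⟩ := Metric.mem_nhds_iff.mp (hopen.mem_nhds hfd0)
      have hmono : StrictMonoOn F (Set.Icc x₀ (x₀ + ε / 2)) := by
        apply strictMonoOn_of_deriv_pos (convex_Icc _ _) hFcont.continuousOn
        intro y hy
        rw [interior_Icc, Set.mem_Ioo] at hy
        rw [(hderiv y).deriv]
        refine hball ?_
        rw [Metric.mem_ball, Real.dist_eq, abs_lt]
        constructor <;> linarith [hy.1, hy.2]
      have hb : x₀ < x₀ + ε / 2 := by linarith
      have h1 : F x₀ < F (x₀ + ε / 2) := hmono (Set.left_mem_Icc.mpr hb.le)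
        (Set.right_mem_Icc.mpr hb.le) hb
      have h2 : F (x₀ + ε / 2) ≤ F x₀ := hmax (by simp only [Set.mem_Ici]; linarith)
      linarith
    · -- upper bound x₀ < r + 1
      by_contra hcon
      push_neg at hcon
      have hfd0 : fd x₀ < 0 := hneg x₀ hcon
      have hopen : IsOpen {y : ℝ | fd y < 0} := isOpen_lt hfdcont continuous_const
      obtain ⟨ε, hε, hball⟩ := Metric.mem_nhds_iff.mp (hopen.mem_nhds hfd0)
      have hx₀1 : 1 < x₀ := by linarith
      obtain ⟨δ, hδ1, hδ2, hδ0⟩ :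
          ∃ δ : ℝ, δ ≤ ε / 2 ∧ δ ≤ (x₀ - 1) / 2 ∧ 0 < δ :=
        ⟨min (ε / 2) ((x₀ - 1) / 2), min_le_left _ _, min_le_right _ _,
          lt_min (by linarith) (by linarith)⟩
      have ha1 : 1 ≤ x₀ - δ := by linarith
      have haq : x₀ - δ < x₀ := by linarith
      have hanti : StrictAntiOn F (Set.Icc (x₀ - δ) x₀) := by
        apply strictAntiOn_of_deriv_neg (convex_Icc _ _) hFcont.continuousOn
        intro y hy
        rw [interior_Icc, Set.mem_Ioo] at hy
        rw [(hderiv y).deriv]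
        refine hball ?_
        rw [Metric.mem_ball, Real.dist_eq, abs_lt]
        constructor <;> linarith [hy.1, hy.2]
      have h1 : F x₀ < F (x₀ - δ) := hanti (Set.left_mem_Icc.mpr haq.le)
        (Set.right_mem_Icc.mpr haq.le) haq
      have h2 : F (x₀ - δ) ≤ F x₀ := hmax (by simp only [Set.mem_Ici]; exact ha1)
      linarith
end

section
/- For every positive integer s there exists a constant C > 0 such that the following holds: for every finite abelian group G with |G| ≥ 2 and every probability distribution p : G → [0, 1] (i.e., Σ_{x∈G} p(x) = 1) satisfying p(x) = p(x⁻¹) for all x ∈ G, |supp(p)| ≤ s, and with supp(p) generating G, the second largest eigenvalue λ₂(p) := max{ Σ_{x∈G} p(x)·Re(χ(x)) : χ ∈ Ĝ, χ nontrivial } of the random walk driven by p satisfies 1 − λ₂(p) ≤ C·|G|^{−4/s}; equivalently, the relaxation time T_rel = 1/(1 − λ₂(p)) satisfies T_rel ≥ C⁻¹·|G|^{4/s}. -/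
open Complex Finset

noncomputable def Complex.abs : AbsoluteValue ℂ ℝ := NormedField.toAbsoluteValue ℂ

lemma Complex.sq_abs (z : ℂ) : Complex.abs z ^ 2 = Complex.normSq z := Complex.sq_norm z

lemma Complex.abs_mul_exp_arg_mul_I (x : ℂ) :
    ((Complex.abs x : ℝ) : ℂ) * Complex.exp (x.arg * Complex.I) = x :=
  Complex.norm_mul_exp_arg_mul_I x

lemma Complex.abs_exp_ofReal_mul_I (x : ℝ) : Complex.abs (Complex.exp (x * Complex.I)) = 1 :=
  Complex.norm_exp_ofReal_mul_I x

lemma Complex.abs_re_le_abs (z : ℂ) : |z.re| ≤ Complex.abs z := Complex.abs_re_le_norm z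

lemma aux_pow_one {a : ℝ} (ha : 0 ≤ a) {n : ℕ} (hn : n ≠ 0) (h : a ^ n = 1) : a = 1 := by
  rcases lt_trichotomy a 1 with h1 | h1 | h1
  · have := pow_lt_one₀ ha h1 hn; simp [h] at this
  · exact h1
  · have := one_lt_pow₀ h1 hn; simp [h] at this

lemma char_abs_s16 {G : Type*} [CommGroup G] [Fintype G] (χ : G →* ℂˣ) (x : G) :
    Complex.abs ((χ x : ℂ)) = 1 := by
  have h1 : ((χ x : ℂ)) ^ (Fintype.card G) = 1 := by
    have : (χ x) ^ (Fintype.card G) = 1 := by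
      rw [← map_pow, pow_card_eq_one, map_one]
    calc ((χ x : ℂ)) ^ (Fintype.card G) = (((χ x) ^ (Fintype.card G) : ℂˣ) : ℂ) := by
          push_cast; ring
      _ = 1 := by rw [this]; simp
  have h2 : (Complex.abs ((χ x : ℂ))) ^ (Fintype.card G) = 1 := by
    rw [← map_pow, h1, map_one]
  exact aux_pow_one (Complex.abs.nonneg _) Fintype.card_ne_zero h2

lemma one_sub_re {u : ℂ} (h : Complex.abs u = 1) :
    1 - u.re = (Complex.abs (u - 1)) ^ 2 / 2 := by
  have h1 : Complex.abs (u-1) ^ 2 = Complex.normSq (u-1) := Complex.sq_abs _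
  have h2 : Complex.abs u ^ 2 = Complex.normSq u := Complex.sq_abs _
  rw [h] at h2
  simp only [Complex.normSq_apply, Complex.sub_re, Complex.sub_im, Complex.one_re,
    Complex.one_im] at h1 h2
  nlinarith [h1, h2]

lemma re_inv_eq {u : ℂ} (h : Complex.abs u = 1) : (u⁻¹).re = u.re := by
  have hn : Complex.normSq u = 1 := by rw [← Complex.sq_abs, h]; norm_num
  rw [Complex.inv_def, hn]
  simp [Complex.conj_re]

lemma chord_le {u w : ℂ} (hu : Complex.abs u = 1) (hw : Complex.abs w = 1) :
    Complex.abs (u - w) ≤ |u.arg - w.arg| := by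
  have hu' : u = Complex.exp (u.arg * Complex.I) := by
    conv_lhs => rw [← Complex.abs_mul_exp_arg_mul_I u]
    rw [hu]; simp
  have hw' : w = Complex.exp (w.arg * Complex.I) := by
    conv_lhs => rw [← Complex.abs_mul_exp_arg_mul_I w]
    rw [hw]; simp
  set a := u.arg; set b := w.arg
  have key : ∀ δ : ℝ, Complex.abs (Complex.exp (δ * Complex.I) - 1) ≤ |δ| := by
    intro δ
    have he : Complex.exp (δ * Complex.I) = Complex.ofReal (Real.cos δ) +
        Complex.ofReal (Real.sin δ) * Complex.I := by
      rw [Complex.exp_mul_I, Complex.ofReal_cos, Complex.ofReal_sin]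
    have hn : Complex.normSq (Complex.exp (δ * Complex.I) - 1)
        = (Real.cos δ - 1)^2 + (Real.sin δ)^2 := by
      rw [he]; simp [Complex.normSq_apply, Complex.cos_ofReal_re, Complex.sin_ofReal_re]; ring
    have hcs : (Real.sin δ)^2 + (Real.cos δ)^2 = 1 := Real.sin_sq_add_cos_sq δ
    have hb : 1 - δ^2/2 ≤ Real.cos δ := Real.one_sub_sq_div_two_le_cos
    have h2 : Complex.abs (Complex.exp (δ * Complex.I) - 1) ^ 2 ≤ |δ| ^ 2 := by
      rw [Complex.sq_abs, hn, _root_.sq_abs]; nlinarith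
    exact pow_le_pow_iff_left₀ (Complex.abs.nonneg _) (abs_nonneg _) two_ne_zero |>.mp h2
  calc Complex.abs (u - w)
      = Complex.abs (Complex.exp (b * Complex.I) * (Complex.exp (((a:ℂ) - b) * Complex.I) - 1)) := by
        rw [mul_sub, mul_one, ← Complex.exp_add]
        have harg : ((b:ℂ)*Complex.I + ((a:ℂ) - b)*Complex.I) = (a:ℂ) * Complex.I := by ring
        rw [harg, ← hu', ← hw']
    _ = Complex.abs (Complex.exp (((a:ℂ) - b) * Complex.I) - 1) := by
        rw [map_mul, Complex.abs_exp_ofReal_mul_I, one_mul]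
    _ ≤ |a - b| := by
        have := key (a - b); push_cast at this; exact this

lemma card_dual (G : Type*) [CommGroup G] [Fintype G] [Fintype (G →* ℂˣ)] :
    Fintype.card (G →* ℂˣ) = Fintype.card G := by
  have : NeZero (Monoid.exponent G) := ⟨Monoid.exponent_ne_zero_of_finite⟩
  obtain ⟨e⟩ := CommGroup.monoidHom_mulEquiv_of_hasEnoughRootsOfUnity G ℂ
  exact Fintype.card_congr e.toEquiv

lemma box_lt (z : ℂ) (N : ℕ) :
    Nat.floor ((z.arg + Real.pi) * N / (2*Real.pi)) < N + 1 := by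
  have h1 : z.arg ≤ Real.pi := Complex.arg_le_pi z
  have hpi : 0 < Real.pi := Real.pi_pos
  have h2 : (z.arg + Real.pi) * N / (2*Real.pi) ≤ (N : ℝ) := by
    rw [div_le_iff₀ (by positivity)]
    have : (0:ℝ) ≤ N := Nat.cast_nonneg N
    nlinarith
  have := Nat.floor_le_floor h2
  rw [Nat.floor_natCast] at this
  omega

lemma box_close {z w : ℂ} {N : ℕ} (hN : 0 < N)
    (h : Nat.floor ((z.arg + Real.pi) * N / (2*Real.pi))
       = Nat.floor ((w.arg + Real.pi) * N / (2*Real.pi))) :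
    |z.arg - w.arg| ≤ 2*Real.pi/N := by
  have hpi : 0 < Real.pi := Real.pi_pos
  set a := (z.arg + Real.pi) * N / (2*Real.pi) with ha
  set b := (w.arg + Real.pi) * N / (2*Real.pi) with hb
  have ha0 : 0 ≤ a := by
    have := Complex.neg_pi_lt_arg z
    have : 0 ≤ z.arg + Real.pi := by linarith
    positivity
  have hb0 : 0 ≤ b := by
    have := Complex.neg_pi_lt_arg w
    have : 0 ≤ w.arg + Real.pi := by linarith
    positivity
  have h1 : a - b < 1 := by
    have h2 : a < Nat.floor a + 1 := Nat.lt_floor_add_one a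
    have h3 : (Nat.floor b : ℝ) ≤ b := Nat.floor_le hb0
    rw [h] at h2; linarith
  have h1' : b - a < 1 := by
    have h2 : b < Nat.floor b + 1 := Nat.lt_floor_add_one b
    have h3 : (Nat.floor a : ℝ) ≤ a := Nat.floor_le ha0
    rw [← h] at h2; linarith
  have hNpos : (0:ℝ) < N := by exact_mod_cast hN
  have hab : a - b = (z.arg - w.arg) * N / (2*Real.pi) := by
    rw [ha, hb]; ring
  have hd : z.arg - w.arg = (a - b) * (2*Real.pi) / N := by
    rw [hab]; field_simp
  rw [hd, abs_div, abs_mul, abs_of_pos (by positivity : (0:ℝ) < 2*Real.pi),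
    abs_of_pos hNpos]
  have habs : |a - b| ≤ 1 := abs_le.mpr ⟨by linarith, by linarith⟩
  rw [div_le_div_iff₀ (by positivity) (by positivity)]
  have h5 : |a-b| * (2*Real.pi*N) ≤ 1 * (2*Real.pi*N) :=
    mul_le_mul_of_nonneg_right habs (by positivity)
  nlinarith [h5]

lemma support_split {G : Type*} [CommGroup G] [Fintype G] (p : G → ℝ)
    (hsym : ∀ x, p x = p x⁻¹) :
    ∃ Ti Tp : Finset G,
      (∀ y ∈ Ti, y⁻¹ = y ∧ y ≠ 1) ∧
      (∀ x : G, p x ≠ 0 → x ≠ 1 → (x ∈ Ti ∨ x ∈ Tp ∨ x⁻¹ ∈ Tp)) ∧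
      Ti.card + 2 * Tp.card ≤ (Function.support p).ncard := by
  classical
  let f : G → ℕ := fun g => (Fintype.equivFin G g : ℕ)
  have hf : Function.Injective f := fun a b h => by
    have := Fin.val_injective h
    exact (Fintype.equivFin G).injective this
  let S' : Finset G := univ.filter (fun x => p x ≠ 0 ∧ x ≠ 1)
  let T : Finset G := S'.filter (fun x => f x ≤ f x⁻¹)
  let Ti : Finset G := T.filter (fun x => x⁻¹ = x)
  let Tp : Finset G := T.filter (fun x => ¬ x⁻¹ = x)
  have hmemS' : ∀ x : G, x ∈ S' ↔ (p x ≠ 0 ∧ x ≠ 1) := by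
    intro x; simp [S']
  have hinvS' : ∀ x : G, x ∈ S' → x⁻¹ ∈ S' := by
    intro x hx
    rw [hmemS'] at *
    exact ⟨by rw [← hsym]; exact hx.1, by simp [hx.2]⟩
  refine ⟨Ti, Tp, ?_, ?_, ?_⟩
  · intro y hy
    simp only [Ti, T, Finset.mem_filter] at hy
    rw [hmemS'] at hy
    exact ⟨hy.2, hy.1.1.2⟩
  · intro x hp h1
    have hxS' : x ∈ S' := (hmemS' x).mpr ⟨hp, h1⟩
    by_cases hle : f x ≤ f x⁻¹
    · have hxT : x ∈ T := by simp only [T, Finset.mem_filter]; exact ⟨hxS', hle⟩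
      by_cases hinv : x⁻¹ = x
      · exact Or.inl (by simp only [Ti, Finset.mem_filter]; exact ⟨hxT, hinv⟩)
      · exact Or.inr (Or.inl (by simp only [Tp, Finset.mem_filter]; exact ⟨hxT, hinv⟩))
    · refine Or.inr (Or.inr ?_)
      have h2 : x⁻¹ ∈ T := by
        simp only [T, Finset.mem_filter]
        refine ⟨hinvS' x hxS', ?_⟩
        rw [inv_inv]
        exact le_of_not_ge hle
      have h3 : ¬ (x⁻¹)⁻¹ = x⁻¹ := by
        rw [inv_inv]
        intro h4
        exact hle (le_of_eq (congrArg f h4))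
      simp only [Tp, Finset.mem_filter]; exact ⟨h2, h3⟩
  · -- counting
    have himg : (Tp.image (fun x => x⁻¹)).card = Tp.card :=
      Finset.card_image_of_injective _ (inv_injective)
    have hTsplit : T = Ti ∪ Tp := (Finset.filter_union_filter_not_eq _ T).symm
    have hdisj0 : Disjoint Ti Tp := Finset.disjoint_filter_filter_not T T _
    have hdisj : Disjoint T (Tp.image (fun x => x⁻¹)) := by
      rw [Finset.disjoint_right]
      intro y hy hyT
      obtain ⟨x, hxTp, rfl⟩ := Finset.mem_image.mp hy
      simp only [Tp, T, Finset.mem_filter] at hxTp hyT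
      have hlt : f x < f x⁻¹ := lt_of_le_of_ne hxTp.1.2 (fun h => hxTp.2 (hf h).symm)
      rw [inv_inv] at hyT
      exact absurd hyT.2 (not_le.mpr hlt)
    have hsub : T ∪ Tp.image (fun x => x⁻¹) ⊆ S' := by
      intro y hy
      rcases Finset.mem_union.mp hy with h | h
      · exact Finset.mem_of_mem_filter y h
      · obtain ⟨x, hxTp, rfl⟩ := Finset.mem_image.mp h
        exact hinvS' x (Finset.mem_of_mem_filter x (Finset.mem_of_mem_filter x hxTp))
    have hcard1 : T.card + Tp.card ≤ S'.card := by
      have := Finset.card_le_card hsub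
      rwa [Finset.card_union_of_disjoint hdisj, himg] at this
    have hcard2 : T.card = Ti.card + Tp.card := by
      rw [hTsplit, Finset.card_union_of_disjoint hdisj0]
    have hS's : S'.card ≤ (Function.support p).ncard := by
      have h1 : (↑S' : Set G) ⊆ Function.support p := by
        intro x hx
        rw [Finset.mem_coe, hmemS'] at hx
        exact hx.1
      calc S'.card = (↑S' : Set G).ncard := (Set.ncard_coe_finset S').symm
        _ ≤ _ := Set.ncard_le_ncard h1 (Set.toFinite _)
    omega

set_option maxHeartbeats 2000000 in
lemma key {G : Type*} [CommGroup G] [Fintype G] [Fintype (G →* ℂˣ)]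
    (s : ℕ) (hs : 0 < s) (p : G → ℝ)
    (hsym : ∀ x, p x = p x⁻¹) (hsupp : (Function.support p).ncard ≤ s)
    (hn : (4:ℝ)^(s*(s+1)) ≤ (Fintype.card G : ℝ)) :
    ∃ χ : G →* ℂˣ, χ ≠ 1 ∧ ∀ x : G, p x ≠ 0 →
      1 - ((χ x : ℂ)).re ≤ 8*Real.pi^2*16^(s+1) * (Fintype.card G : ℝ) ^ (-(4:ℝ)/s) := by
  classical
  obtain ⟨Ti, Tp, hTi, hcover, hcount⟩ := support_split p hsym
  have hcount' : Ti.card + 2*Tp.card ≤ s := le_trans hcount hsupp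
  set n := Fintype.card G with hndef
  have hn0 : (0:ℝ) < n := lt_of_lt_of_le (by positivity) hn
  have hn1 : (1:ℝ) ≤ n := le_trans (one_le_pow₀ (by norm_num)) hn
  have hs' : (0:ℝ) < s := by exact_mod_cast hs
  set xR := (n:ℝ)^((2:ℝ)/s) / 4^(s+1) with hxdef
  have hpow : ((4:ℝ)^(s*(s+1)))^((2:ℝ)/s) = 4^(2*(s+1)) := by
    rw [← Real.rpow_natCast (4:ℝ) (s*(s+1)), ← Real.rpow_natCast (4:ℝ) (2*(s+1)),
      ← Real.rpow_mul (by norm_num)]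
    congr 1
    push_cast
    field_simp
  have hx1 : (4:ℝ)^(s+1) ≤ xR := by
    rw [hxdef, le_div_iff₀ (by positivity)]
    have h2 : ((4:ℝ)^(s*(s+1)))^((2:ℝ)/s) ≤ (n:ℝ)^((2:ℝ)/s) :=
      Real.rpow_le_rpow (by positivity) hn (by positivity)
    rw [hpow] at h2
    calc (4:ℝ)^(s+1) * 4^(s+1) = 4^(2*(s+1)) := by rw [← pow_add]; ring_nf
      _ ≤ _ := h2
  have hx2 : (2:ℝ) ≤ xR := by
    refine le_trans ?_ hx1
    calc (2:ℝ) ≤ 4^1 := by norm_num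
      _ ≤ 4^(s+1) := pow_le_pow_right₀ (by norm_num) (by omega)
  have hx0 : (0:ℝ) ≤ xR := by linarith
  set N := Nat.floor xR with hNdef
  have hN1 : 1 ≤ N := Nat.le_floor (by exact_mod_cast (by linarith : (1:ℝ) ≤ xR))
  have hN0 : 0 < N := hN1
  have hNR0 : (0:ℝ) < N := by exact_mod_cast hN0
  have hNlow : xR/2 ≤ (N:ℝ) := by
    have := Nat.sub_one_lt_floor xR
    rw [← hNdef] at this
    linarith
  have hNup : (N:ℝ) + 1 ≤ 2*xR := by
    have := Nat.floor_le hx0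
    rw [← hNdef] at this
    linarith
  -- counting
  have hcard_real : ((N:ℝ)+1)^Tp.card * 2^Ti.card < n := by
    rcases Nat.eq_zero_or_pos Tp.card with h0 | h1
    · rw [h0, pow_zero, one_mul]
      calc (2:ℝ)^Ti.card ≤ 2^s := pow_le_pow_right₀ (by norm_num) (by omega)
        _ < 4^(s*(s+1)) := by
            calc (2:ℝ)^s < 4^s := by
                  apply pow_lt_pow_left₀ (by norm_num) (by norm_num) (by omega)
              _ ≤ 4^(s*(s+1)) := pow_le_pow_right₀ (by norm_num) (Nat.le_mul_of_pos_right s (by omega))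
        _ ≤ n := hn
    · have hA : ((N:ℝ)+1) ≤ (n:ℝ)^((2:ℝ)/s) / (2*4^s) := by
        refine le_trans hNup (le_of_eq ?_)
        rw [hxdef]
        field_simp
        ring
      have hstep : ((N:ℝ)+1)^Tp.card ≤ ((n:ℝ)^((2:ℝ)/s))^Tp.card / (2*4^s)^Tp.card := by
        rw [← div_pow]
        exact pow_le_pow_left₀ (by positivity) hA _
      have hup : ((n:ℝ)^((2:ℝ)/s))^Tp.card ≤ n := by
        rw [← Real.rpow_natCast ((n:ℝ)^((2:ℝ)/s)) _, ← Real.rpow_mul (le_of_lt hn0)]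
        have hexp : (2:ℝ)/s * Tp.card ≤ 1 := by
          rw [div_mul_eq_mul_div, div_le_one hs']
          have h2 : 2*Tp.card ≤ s := by omega
          exact_mod_cast h2
        calc (n:ℝ)^((2:ℝ)/s * Tp.card) ≤ (n:ℝ)^(1:ℝ) :=
              Real.rpow_le_rpow_of_exponent_le hn1 hexp
          _ = n := Real.rpow_one _
      have hden : (2:ℝ)*4^s ≤ (2*4^s)^Tp.card := by
        have h41 : (1:ℝ) ≤ 4^s := one_le_pow₀ (by norm_num)
        exact le_self_pow₀ (by linarith) (by omega)
      have h2i : (2:ℝ)^Ti.card ≤ 4^s := by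
        calc (2:ℝ)^Ti.card ≤ 2^s := pow_le_pow_right₀ (by norm_num) (by omega)
          _ ≤ 4^s := pow_le_pow_left₀ (by norm_num) (by norm_num) s
      have hq : ((N:ℝ)+1)^Tp.card ≤ n / (2*4^s) := by
        refine le_trans hstep ?_
        exact div_le_div₀ (le_of_lt hn0) hup (by positivity) hden
      calc ((N:ℝ)+1)^Tp.card * 2^Ti.card ≤ (n / (2*4^s)) * 4^s := by
            apply mul_le_mul hq h2i (by positivity) (by positivity)
        _ = n/2 := by field_simp
        _ < n := by linarith
  have hcard_nat : (N+1)^Tp.card * 2^Ti.card < n := by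
    have : (((N+1)^Tp.card * 2^Ti.card : ℕ) : ℝ) < (n:ℝ) := by push_cast; exact hcard_real
    exact_mod_cast this
  have hcard_lt : Fintype.card ((↥Tp → Fin (N+1)) × (↥Ti → Prop)) < Fintype.card (G →* ℂˣ) := by
    rw [Fintype.card_prod, Fintype.card_fun, Fintype.card_fun, Fintype.card_fin,
      Fintype.card_coe, Fintype.card_coe, Fintype.card_prop, card_dual]
    exact hcard_nat
  set F : (G →* ℂˣ) → ((↥Tp → Fin (N+1)) × (↥Ti → Prop)) := fun ψ =>
    (fun y => ⟨Nat.floor ((((ψ (y:G) : ℂ)).arg + Real.pi) * N / (2*Real.pi)), box_lt _ N⟩,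
     fun y => ψ (y:G) = 1) with hFdef
  obtain ⟨χ₁, χ₂, hne, hFeq⟩ := Fintype.exists_ne_map_eq_of_card_lt F hcard_lt
  refine ⟨χ₁ * χ₂⁻¹, fun h => hne (by rw [← mul_inv_eq_one]; exact h), ?_⟩
  set χ := χ₁ * χ₂⁻¹ with hχdef
  have hχval : ∀ y : G, ((χ y : ℂ)) = (χ₁ y : ℂ) * ((χ₂ y : ℂ))⁻¹ := by
    intro y
    rw [hχdef]
    simp
  have hbound : ∀ y : G, y ∈ Tp → Complex.abs ((χ y : ℂ) - 1) ≤ 2*Real.pi/N := by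
    intro y hy
    have h1 := congrFun (congrArg Prod.fst hFeq) ⟨y, hy⟩
    have h2 : Nat.floor ((((χ₁ y : ℂ)).arg + Real.pi) * N / (2*Real.pi))
        = Nat.floor ((((χ₂ y : ℂ)).arg + Real.pi) * N / (2*Real.pi)) := by
      simpa [hFdef] using congrArg Fin.val h1
    have h3 := box_close hN0 h2
    have h4 : Complex.abs ((χ₁ y : ℂ) - (χ₂ y : ℂ)) ≤ 2*Real.pi/N :=
      le_trans (chord_le (char_abs_s16 χ₁ y) (char_abs_s16 χ₂ y)) h3
    have h5 : ((χ y : ℂ)) - 1 = ((χ₁ y : ℂ) - (χ₂ y:ℂ)) * ((χ₂ y : ℂ))⁻¹ := by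
      rw [hχval y]
      have hne2 : ((χ₂ y : ℂ)) ≠ 0 := Units.ne_zero _
      field_simp
    rw [h5, map_mul, map_inv₀, char_abs_s16, inv_one, mul_one]
    exact h4
  have hTione : ∀ y : G, y ∈ Ti → (χ y : ℂ) = 1 := by
    intro y hy
    have h1 := congrFun (congrArg Prod.snd hFeq) ⟨y, hy⟩
    simp only [hFdef] at h1
    obtain ⟨hyinv, hy1⟩ := hTi y hy
    have hyy : y * y = 1 := by
      nth_rewrite 2 [← hyinv]
      simp
    have hsq : ∀ ψ : G →* ℂˣ, ((ψ y : ℂ))^2 = 1 := by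
      intro ψ
      have h2 : ψ y * ψ y = 1 := by rw [← map_mul, hyy, map_one]
      have h3 : ((ψ y : ℂ)) * ((ψ y : ℂ)) = 1 := by
        have := congrArg (Units.val) h2
        push_cast at this
        exact_mod_cast this
      rw [sq]; exact h3
    have hdich : ∀ ψ : G →* ℂˣ, (ψ y : ℂ) = 1 ∨ (ψ y : ℂ) = -1 := by
      intro ψ
      have hfact : ((ψ y:ℂ) - 1)*((ψ y:ℂ)+1) = 0 := by linear_combination hsq ψ
      rcases mul_eq_zero.mp hfact with h | h
      · left; exact sub_eq_zero.mp h
      · right; linear_combination h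
    have hcoe : ∀ ψ : G →* ℂˣ, (ψ y = 1) ↔ ((ψ y : ℂ) = 1) := by
      intro ψ
      constructor
      · intro h; rw [h]; simp
      · intro h; ext; simpa using h
    have hiff : (χ₁ y = 1) ↔ (χ₂ y = 1) := iff_of_eq h1
    by_cases hc : (χ₁ y : ℂ) = 1
    · have hc2 : (χ₂ y : ℂ) = 1 := (hcoe χ₂).mp (hiff.mp ((hcoe χ₁).mpr hc))
      rw [hχval y, hc, hc2]
      norm_num
    · have hc1 : (χ₁ y : ℂ) = -1 := (hdich χ₁).resolve_left hc
      have hc2' : ¬ (χ₂ y = 1) := fun h => hc ((hcoe χ₁).mp (hiff.mpr h))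
      have hc2 : (χ₂ y : ℂ) = -1 :=
        (hdich χ₂).resolve_left (fun h => hc2' ((hcoe χ₂).mpr h))
      rw [hχval y, hc1, hc2]
      norm_num
  have hmain : ∀ x : G, p x ≠ 0 → 1 - ((χ x :ℂ)).re ≤ 2*Real.pi^2/(N:ℝ)^2 := by
    have hres : ∀ y : G, (y ∈ Ti ∨ y ∈ Tp) → 1 - ((χ y:ℂ)).re ≤ 2*Real.pi^2/(N:ℝ)^2 := by
      intro y hy
      rcases hy with h | h
      · rw [hTione y h]
        simp only [Complex.one_re, sub_self]
        positivity
      · rw [one_sub_re (char_abs_s16 χ y)]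
        have h6 := hbound y h
        have h7 : Complex.abs ((χ y : ℂ) - 1)^2 ≤ (2*Real.pi/N)^2 := by
          apply pow_le_pow_left₀ (Complex.abs.nonneg _) h6
        calc Complex.abs ((χ y : ℂ) - 1)^2/2 ≤ (2*Real.pi/N)^2/2 := by linarith
          _ = 2*Real.pi^2/(N:ℝ)^2 := by field_simp
    intro x hp
    by_cases h1 : x = 1
    · subst h1
      rw [map_one]
      simp only [Units.val_one, Complex.one_re, sub_self]
      positivity
    rcases hcover x hp h1 with h | h | h
    · exact hres x (Or.inl h)
    · exact hres x (Or.inr h)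
    · have h2 := hres x⁻¹ (Or.inr h)
      have h3 : ((χ x⁻¹ : ℂ)).re = ((χ x : ℂ)).re := by
        rw [map_inv, Units.val_inv_eq_inv_val]
        exact re_inv_eq (char_abs_s16 χ x)
      rwa [h3] at h2
  intro x hp
  refine le_trans (hmain x hp) ?_
  have hA0 : (0:ℝ) < (n:ℝ)^((4:ℝ)/s) := Real.rpow_pos_of_pos hn0 _
  have hx4 : (n:ℝ)^((2:ℝ)/s) * (n:ℝ)^((2:ℝ)/s) = (n:ℝ)^((4:ℝ)/s) := by
    rw [← Real.rpow_add hn0]; congr 1; ring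
  have h44 : ((4:ℝ)^(s+1))^2 = 16^(s+1) := by
    rw [← pow_mul, show (16:ℝ) = 4^2 by norm_num, ← pow_mul, Nat.mul_comm]
  have hxsq : xR^2 = (n:ℝ)^((4:ℝ)/s) / 16^(s+1) := by
    rw [hxdef, div_pow, h44, sq, hx4]
  have hN2 : (n:ℝ)^((4:ℝ)/s) / (4*16^(s+1)) ≤ (N:ℝ)^2 := by
    have hmul : (xR/2)*(xR/2) ≤ (N:ℝ)*(N:ℝ) :=
      mul_le_mul hNlow hNlow (by linarith) (le_of_lt hNR0)
    have h5 : xR^2/4 ≤ (N:ℝ)^2 := by nlinarith [hmul]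
    have heq : (n:ℝ)^((4:ℝ)/s)/(4*16^(s+1)) = xR^2/4 := by
      rw [hxsq]
      have h16 : ((16:ℝ)^(s+1)) ≠ 0 := by positivity
      field_simp
    rw [heq]
    exact h5
  have hrw : (n:ℝ) ^ (-(4:ℝ)/s) = ((n:ℝ)^((4:ℝ)/s))⁻¹ := by
    rw [← Real.rpow_neg (le_of_lt hn0)]; congr 1; ring
  rw [hrw]
  have hfin : (n:ℝ)^((4:ℝ)/s) ≤ 4*16^(s+1) * (N:ℝ)^2 := by
    have := (div_le_iff₀ (by positivity : (0:ℝ) < 4*16^(s+1))).mp hN2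
    linarith [this]
  rw [div_le_iff₀ (by positivity : (0:ℝ) < (N:ℝ)^2)]
  have h6 : 2*Real.pi^2*((n:ℝ)^((4:ℝ)/s))⁻¹ * ((n:ℝ)^((4:ℝ)/s))
      ≤ 2*Real.pi^2*((n:ℝ)^((4:ℝ)/s))⁻¹ * (4*16^(s+1)*(N:ℝ)^2) :=
    mul_le_mul_of_nonneg_left hfin (by positivity)
  have h7 : 2*Real.pi^2*((n:ℝ)^((4:ℝ)/s))⁻¹ * ((n:ℝ)^((4:ℝ)/s)) = 2*Real.pi^2 := by
    field_simp
  calc 2*Real.pi^2 = 2*Real.pi^2*((n:ℝ)^((4:ℝ)/s))⁻¹ * ((n:ℝ)^((4:ℝ)/s)) := h7.symm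
    _ ≤ 2*Real.pi^2*((n:ℝ)^((4:ℝ)/s))⁻¹ * (4*16^(s+1)*(N:ℝ)^2) := h6
    _ = 8*Real.pi^2*16^(s+1) * ((n:ℝ)^((4:ℝ)/s))⁻¹ * (N:ℝ)^2 := by ring

set_option maxHeartbeats 2000000 in
/-- for each `s ≥ 1` there is `C > 0` such that for every finite abelian
group `G` with `|G| ≥ 2` and every symmetric probability `p` on `G` with
`|supp(p)| ≤ s` whose support generates `G`, the second largest eigenvalue
`λ₂ = max{Σₓ p(x) Re χ(x) : χ ≠ 1}` satisfies `1 − λ₂ ≤ C |G|^{−4/s}`;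
equivalently `T_rel = 1/(1 − λ₂) ≥ C⁻¹ |G|^{4/s}`. -/
theorem stmt_16 (s : ℕ) (hs : 0 < s) :
    ∃ C : ℝ, 0 < C ∧
      ∀ (G : Type*) [CommGroup G] [Fintype G] (p : G → ℝ),
        2 ≤ Fintype.card G →
        (∀ x, 0 ≤ p x) → (∑ x : G, p x) = 1 →
        (∀ x, p x = p x⁻¹) →
        (Function.support p).ncard ≤ s →
        Subgroup.closure (Function.support p) = ⊤ →
        1 - sSup {l : ℝ | ∃ χ : G →* ℂˣ, χ ≠ 1 ∧
            l = ∑ x : G, p x * ((χ x : ℂ)).re} ≤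
          C * (Fintype.card G : ℝ) ^ (-(4 : ℝ) / s) ∧
        C⁻¹ * (Fintype.card G : ℝ) ^ ((4 : ℝ) / s) ≤
          (1 - sSup {l : ℝ | ∃ χ : G →* ℂˣ, χ ≠ 1 ∧
            l = ∑ x : G, p x * ((χ x : ℂ)).re})⁻¹ := by

  classical
  refine ⟨20 * 16^(2*s+2), by positivity, ?_⟩
  intro G _ _ p hcard hp0 hp1 hsym hsupp hclos
  set n := Fintype.card G with hndef
  have hn2 : (2:ℝ) ≤ n := by exact_mod_cast hcard
  have hn0 : (0:ℝ) < n := by linarith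
  set L := {l : ℝ | ∃ χ : G →* ℂˣ, χ ≠ 1 ∧ l = ∑ x : G, p x * ((χ x : ℂ)).re} with hLdef
  have hre_le : ∀ (χ : G →* ℂˣ) (i : G), |((χ i : ℂ)).re| ≤ 1 := by
    intro χ i
    have h := Complex.abs_re_le_abs ((χ i : ℂ))
    rwa [char_abs_s16] at h
  have hval_le : ∀ χ : G →* ℂˣ, (∑ x : G, p x * ((χ x : ℂ)).re) ≤ 1 := by
    intro χ
    rw [← hp1]
    apply Finset.sum_le_sum
    intro i _
    have h2 := (abs_le.mp (hre_le χ i)).2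
    nlinarith [hp0 i]
  have hBdd : BddAbove L := ⟨1, fun l hl => by obtain ⟨χ, _, rfl⟩ := hl; exact hval_le χ⟩
  have hnontriv : Nontrivial (G →* ℂˣ) := by
    rw [← Fintype.one_lt_card_iff_nontrivial, card_dual]
    omega
  obtain ⟨χe, hχe⟩ := exists_ne (1 : G →* ℂˣ)
  have hLne : L.Nonempty := ⟨_, χe, hχe, rfl⟩
  have hLfin : L.Finite := by
    have hsubL : L ⊆ (fun χ : G →* ℂˣ => ∑ x : G, p x * ((χ x : ℂ)).re) '' Set.univ := by
      intro l hl
      obtain ⟨χ, h1, rfl⟩ := hl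
      exact ⟨χ, trivial, rfl⟩
    exact Set.Finite.subset (Set.Finite.image _ Set.finite_univ) hsubL
  have hmem := Set.Nonempty.csSup_mem hLne hLfin
  have hlt1 : sSup L < 1 := by
    obtain ⟨χ₀, hχ₀, hEq⟩ := hmem
    rw [hEq]
    rcases lt_or_eq_of_le (hval_le χ₀) with h | h
    · exact h
    · exfalso
      have hsum0 : ∑ x : G, p x * (1 - ((χ₀ x : ℂ)).re) = 0 := by
        have h9 : ∑ x : G, (p x - p x * ((χ₀ x : ℂ)).re) = 0 := by
          rw [Finset.sum_sub_distrib, hp1, h]; ring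
        calc ∑ x : G, p x * (1 - ((χ₀ x : ℂ)).re)
            = ∑ x : G, (p x - p x * ((χ₀ x : ℂ)).re) := by
              apply Finset.sum_congr rfl; intros; ring
          _ = 0 := h9
      have hzero := (Finset.sum_eq_zero_iff_of_nonneg (fun i _ => by
          have h2 := (abs_le.mp (hre_le χ₀ i)).2
          have h3 := hp0 i
          nlinarith : ∀ i ∈ univ, 0 ≤ p i * (1 - ((χ₀ i : ℂ)).re))).mp hsum0
      have hker : Function.support p ⊆ (χ₀.ker : Set G) := by
        intro x hx
        have hpx : p x ≠ 0 := hx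
        have h3 : ((χ₀ x : ℂ)).re = 1 := by
          have h4 := hzero x (Finset.mem_univ x)
          rcases mul_eq_zero.mp h4 with h5 | h5
          · exact absurd h5 hpx
          · linarith
        have h5 := char_abs_s16 χ₀ x
        have h6 : Complex.normSq ((χ₀ x : ℂ)) = 1 := by rw [← Complex.sq_abs, h5]; norm_num
        rw [Complex.normSq_apply] at h6
        have h7 : ((χ₀ x:ℂ)).im = 0 := by
          have h8 : ((χ₀ x:ℂ)).im^2 = 0 := by nlinarith
          exact pow_eq_zero_iff two_ne_zero |>.mp h8
        have h4 : (χ₀ x : ℂ) = 1 := by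
          apply Complex.ext
          · rw [h3]; simp
          · rw [h7]; simp
        have h8 : χ₀ x = 1 := by ext; simpa using h4
        exact h8
      have hone : χ₀ = 1 := by
        have h9 : (⊤ : Subgroup G) ≤ χ₀.ker := by
          rw [← hclos]; exact (Subgroup.closure_le _).mpr hker
        ext x
        have h10 := h9 (Subgroup.mem_top x)
        rw [MonoidHom.mem_ker] at h10
        simp [h10]
      exact hχ₀ hone
  have hpos1 : 0 < 1 - sSup L := by linarith
  have hkey : ∃ χ : G →* ℂˣ, χ ≠ 1 ∧ ∀ x : G, p x ≠ 0 →
      1 - ((χ x : ℂ)).re ≤ (20*16^(2*s+2) : ℝ) * (n:ℝ)^(-(4:ℝ)/s) := by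
    by_cases hbig : (4:ℝ)^(s*(s+1)) ≤ (n:ℝ)
    · obtain ⟨χ, h1, h2⟩ := key s hs p hsym hsupp hbig
      refine ⟨χ, h1, fun x hx => le_trans (h2 x hx) ?_⟩
      have hπ : Real.pi^2 ≤ 10 := by nlinarith [Real.pi_lt_d2, Real.pi_pos]
      have hc : (8*Real.pi^2*16^(s+1) : ℝ) ≤ 20*16^(2*s+2) := by
        have h16a : (16:ℝ) ≤ 16^(s+1) := by
          calc (16:ℝ) = 16^1 := by norm_num
            _ ≤ 16^(s+1) := pow_le_pow_right₀ (by norm_num) (by omega)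
        have hsplit : (16:ℝ)^(2*s+2) = 16^(s+1) * 16^(s+1) := by
          rw [← pow_add]; congr 1; ring
        nlinarith [h16a, hπ, hsplit]
      have hrp : (0:ℝ) ≤ (n:ℝ)^(-(4:ℝ)/s) := Real.rpow_nonneg (by positivity) _
      exact mul_le_mul_of_nonneg_right hc hrp
    · push_neg at hbig
      refine ⟨χe, hχe, fun x hx => ?_⟩
      have h2 : 1 - ((χe x:ℂ)).re ≤ 2 := by
        have := (abs_le.mp (hre_le χe x)).1
        linarith
      refine le_trans h2 ?_
      have hup : (n:ℝ)^((4:ℝ)/s) ≤ 16^(2*s+2) := by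
        have h3 : (n:ℝ)^((4:ℝ)/s) ≤ ((4:ℝ)^(s*(s+1)))^((4:ℝ)/s) :=
          Real.rpow_le_rpow (by positivity) (le_of_lt hbig) (by positivity)
        have h4 : ((4:ℝ)^(s*(s+1)))^((4:ℝ)/s) = 16^(2*s+2) := by
          rw [show ((16:ℝ))^(2*s+2) = (4:ℝ)^(2*(2*s+2)) by
            rw [pow_mul]; norm_num]
          rw [← Real.rpow_natCast (4:ℝ) (s*(s+1)), ← Real.rpow_mul (by norm_num),
            ← Real.rpow_natCast (4:ℝ) (2*(2*s+2))]
          congr 1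
          have hs0 : (s:ℝ) ≠ 0 := by positivity
          push_cast
          field_simp
          ring
        linarith
      have h5 : (n:ℝ)^(-(4:ℝ)/s) = ((n:ℝ)^((4:ℝ)/s))⁻¹ := by
        rw [← Real.rpow_neg (by positivity)]; congr 1; ring
      rw [h5]
      have h6 : (0:ℝ) < (n:ℝ)^((4:ℝ)/s) := Real.rpow_pos_of_pos hn0 _
      have h7 : (2:ℝ) ≤ 20 * ((n:ℝ)^((4:ℝ)/s)) * ((n:ℝ)^((4:ℝ)/s))⁻¹ := by
        rw [mul_inv_cancel_right₀ (ne_of_gt h6)]; norm_num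
      calc (2:ℝ) ≤ 20 * ((n:ℝ)^((4:ℝ)/s)) * ((n:ℝ)^((4:ℝ)/s))⁻¹ := h7
        _ ≤ 20*16^(2*s+2) * ((n:ℝ)^((4:ℝ)/s))⁻¹ := by
            apply mul_le_mul_of_nonneg_right _ (by positivity)
            nlinarith [hup]
  obtain ⟨χ, hχne, hχ⟩ := hkey
  have hε0 : (0:ℝ) ≤ (20*16^(2*s+2) : ℝ) * (n:ℝ)^(-(4:ℝ)/s) := by
    apply mul_nonneg (by positivity) (Real.rpow_nonneg (by positivity) _)
  have hsum_ge : 1 - (20*16^(2*s+2) : ℝ) * (n:ℝ)^(-(4:ℝ)/s) ≤ ∑ x : G, p x * ((χ x:ℂ)).re := by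
    have hterm : ∑ x : G, p x * (1 - (20*16^(2*s+2) : ℝ) * (n:ℝ)^(-(4:ℝ)/s))
        ≤ ∑ x : G, p x * ((χ x:ℂ)).re := by
      apply Finset.sum_le_sum
      intro i _
      by_cases hpi : p i = 0
      · simp [hpi]
      · exact mul_le_mul_of_nonneg_left (by linarith [hχ i hpi]) (hp0 i)
    calc 1 - (20*16^(2*s+2) : ℝ) * (n:ℝ)^(-(4:ℝ)/s)
        = ∑ x : G, p x * (1 - (20*16^(2*s+2) : ℝ) * (n:ℝ)^(-(4:ℝ)/s)) := by
          rw [← Finset.sum_mul, hp1, one_mul]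
      _ ≤ _ := hterm
  have hSup_ge : 1 - (20*16^(2*s+2) : ℝ) * (n:ℝ)^(-(4:ℝ)/s) ≤ sSup L :=
    le_trans hsum_ge (le_csSup hBdd ⟨χ, hχne, rfl⟩)
  have hdle : 1 - sSup L ≤ (20*16^(2*s+2):ℝ) * (n:ℝ)^(-(4:ℝ)/s) := by linarith
  constructor
  · exact hdle
  · have hinv := one_div_le_one_div_of_le hpos1 hdle
    rw [one_div, one_div] at hinv
    refine le_trans (le_of_eq ?_) hinv
    have h5 : (n:ℝ)^(-(4:ℝ)/s) = ((n:ℝ)^((4:ℝ)/s))⁻¹ := by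
      rw [← Real.rpow_neg (by positivity)]; congr 1; ring
    rw [h5, mul_inv, mul_inv, inv_inv]
    ring
end
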